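/- arXiv:1508.05712 — 5 statements merged into one kernel-verified Lean document; each statement's English description precedes it below -/
import Mathlib

section
/- For 0 ≤ r ≤ 8, a class D ∈ Λ_r is exceptional if and only if D is obtained by permuting the last r coordinates of one of the following vectors (restricted to those that fit in r+1 coordinates, padding with zeros): (0; 1, 0, …, 0) for r ≥ 1; (1; −1, −1, 0, …, 0) for r ≥ 2; (2; −1, −1, −1, −1, −1, 0, …, 0) for r ≥ 5; (3; −2, −1, −1, −1, −1, −1, −1, 0) for r ≥ 7; (4; −2, −2, −2, −1, −1, −1, −1, −1), (5; −2, −2, −2, −2, −2, −2, −1, −1), and (6; −3, −2, −2, −2, −2, −2, −2, −2) for r = 8. Here (a; b₁, …, b_r) denotes the class aL + b₁E₁ + ⋯ + b_rE_r, i.e., the vector (a, b₁, …, b_r) ∈ Λ_r. -/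
/-- The intersection pairing on the Picard lattice `Λ_r = ℤ^(r+1)`:
`⟨x, y⟩ = x₀y₀ − x₁y₁ − ⋯ − x_r y_r`. -/
def pair {r : ℕ} (x y : Fin (r + 1) → ℤ) : ℤ :=
  x 0 * y 0 - ∑ i : Fin r, x i.succ * y i.succ

/-- The canonical class `K_r = (−3, 1, …, 1)`. -/
def Kc (r : ℕ) : Fin (r + 1) → ℤ := fun i => if i = 0 then -3 else 1

/-- Exceptional classes (classes of `(−1)`-curves). -/
def Exceptional {r : ℕ} (E : Fin (r + 1) → ℤ) : Prop :=
  pair E E = -1 ∧ pair (Kc r) E = -1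

/-- Nef classes: nonnegative pairing with every exceptional class. -/
def Nef {r : ℕ} (D : Fin (r + 1) → ℤ) : Prop :=
  ∀ E : Fin (r + 1) → ℤ, Exceptional E → 0 ≤ pair D E

/-- Conics: nef classes `Q` with `⟨Q,Q⟩ = 0` and `⟨K,Q⟩ = −2`. -/
def Conic {r : ℕ} (Q : Fin (r + 1) → ℤ) : Prop :=
  Nef Q ∧ pair Q Q = 0 ∧ pair (Kc r) Q = -2

/-- Twisted cubics: nef classes `C` with `⟨C,C⟩ = 1` and `⟨K,C⟩ = −3`. -/
def TwistedCubic {r : ℕ} (C : Fin (r + 1) → ℤ) : Prop :=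
  Nef C ∧ pair C C = 1 ∧ pair (Kc r) C = -3

/-- The types of exceptional classes: a leading coefficient (of `L`) together
with the list of nonzero coefficients of the `E_i` (to be padded with zeros
and permuted). -/
def baseVectors : List (ℤ × List ℤ) :=
  [(0, [1]),
   (1, [-1, -1]),
   (2, [-1, -1, -1, -1, -1]),
   (3, [-2, -1, -1, -1, -1, -1, -1]),
   (4, [-2, -2, -2, -1, -1, -1, -1, -1]),
   (5, [-2, -2, -2, -2, -2, -2, -1, -1]),
   (6, [-3, -2, -2, -2, -2, -2, -2, -2])]


open Finset

/-! ### Auxiliary lemmas -/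


def cnt {r : ℕ} (f : Fin r → ℤ) (v : ℤ) : ℤ := ∑ j : Fin r, if f j = v then (1:ℤ) else 0

lemma cnt_nonneg {r : ℕ} (f : Fin r → ℤ) (v : ℤ) : 0 ≤ cnt f v :=
  Finset.sum_nonneg fun j _ => by positivity

lemma cnt_card {r : ℕ} (f : Fin r → ℤ) (v : ℤ) :
    cnt f v = ((univ.filter fun j => f j = v).card : ℤ) := by
  unfold cnt
  rw [Finset.card_filter, Nat.cast_sum]
  exact Finset.sum_congr rfl fun j _ => by split <;> simp

lemma exists_perm_of_cnt {r : ℕ} (f g : Fin r → ℤ)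
    (h : ∀ v : ℤ, cnt f v = cnt g v) :
    ∃ σ : Equiv.Perm (Fin r), ∀ j, f j = g (σ j) := by
  have hc : ∀ v : ℤ, Fintype.card {j // f j = v} = Fintype.card {j // g j = v} := by
    intro v
    have := h v
    rw [cnt_card, cnt_card] at this
    have h2 : (univ.filter fun j => f j = v).card = (univ.filter fun j => g j = v).card := by
      exact_mod_cast this
    simpa [Fintype.card_subtype] using h2
  have e : ∀ v : ℤ, {j // f j = v} ≃ {j // g j = v} := fun v => Fintype.equivOfCardEq (hc v)
  exact ⟨Equiv.ofFiberEquiv e, fun j => (Equiv.ofFiberEquiv_map e j).symm⟩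

lemma sum_getD (F : ℤ → ℤ) :
    ∀ (l : List ℤ) (r : ℕ), l.length ≤ r →
      ∑ j : Fin r, F (l.getD (j : ℕ) 0) = (l.map F).sum + ((r : ℤ) - l.length) * F 0
  | [], r, _ => by simp [Finset.sum_const, mul_comm]
  | x :: xs, 0, h => by simp at h
  | x :: xs, r + 1, h => by
    rw [Fin.sum_univ_succ]
    have ih := sum_getD F xs r (by simpa using h)
    simp only [Fin.val_zero, List.getD_cons_zero, Fin.val_succ, List.getD_cons_succ]
    rw [ih]
    simp [List.map_cons, List.sum_cons]
    ring

lemma pm_counts {r : ℕ} (u : Fin r → ℤ) (h : ∀ j, u j = -1 ∨ u j = 0 ∨ u j = 1) :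
    cnt u (-1) + cnt u 0 + cnt u 1 = r ∧
    cnt u 1 - cnt u (-1) = ∑ j, u j ∧
    cnt u 1 + cnt u (-1) = ∑ j, u j * u j := by
  refine ⟨?_, ?_, ?_⟩
  · unfold cnt
    rw [← Finset.sum_add_distrib, ← Finset.sum_add_distrib]
    rw [Finset.sum_congr rfl (fun j _ =>
      show (((if u j = -1 then (1:ℤ) else 0) + if u j = 0 then 1 else 0) + if u j = 1 then 1 else 0) = 1 by
        rcases h j with h' | h' | h' <;> simp [h'])]
    simp [Finset.sum_const]
  · unfold cnt
    rw [← Finset.sum_sub_distrib]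
    exact Finset.sum_congr rfl fun j _ => by rcases h j with h' | h' | h' <;> simp [h']
  · unfold cnt
    rw [← Finset.sum_add_distrib]
    exact Finset.sum_congr rfl fun j _ => by rcases h j with h' | h' | h' <;> simp [h']

lemma cnt_eq_zero {r : ℕ} (u : Fin r → ℤ) (v : ℤ) (h : ∀ j, u j ≠ v) : cnt u v = 0 :=
  Finset.sum_eq_zero fun j _ => by simp [h j]

lemma cnt_shift {r : ℕ} (f : Fin r → ℤ) (c v : ℤ) :
    cnt f v = cnt (fun j => f j + c) (v + c) :=
  Finset.sum_congr rfl fun j _ => by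
    congr 1
    simp only [eq_iff_iff]
    omega

lemma sum_shift {r : ℕ} (f : Fin r → ℤ) (c : ℤ) :
    (∑ j, (f j + c)) = (∑ j, f j) + r * c := by
  rw [Finset.sum_add_distrib]
  simp [Finset.sum_const, mul_comm]

lemma sum_sq_shift {r : ℕ} (f : Fin r → ℤ) (c : ℤ) :
    (∑ j, (f j + c) * (f j + c)) = (∑ j, f j * f j) + 2 * c * (∑ j, f j) + r * (c * c) := by
  have : ∀ j : Fin r, (f j + c) * (f j + c) = f j * f j + 2 * c * f j + c * c := fun j => by ring
  rw [Finset.sum_congr rfl fun j _ => this j]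
  rw [Finset.sum_add_distrib, Finset.sum_add_distrib, ← Finset.mul_sum]
  simp [Finset.sum_const, mul_comm]

lemma pm_of_sum_sq {r : ℕ} (u : Fin r → ℤ) (k : ℤ) (hk : k ≤ 3)
    (h : ∑ j, u j * u j = k) : ∀ j, u j = -1 ∨ u j = 0 ∨ u j = 1 := by
  intro j
  have h1 : u j * u j ≤ k := by
    rw [← h]
    exact Finset.single_le_sum (fun i _ => mul_self_nonneg (u i)) (Finset.mem_univ j)
  have h2 : u j * u j ≤ 3 := le_trans h1 hk
  have h3 : -1 ≤ u j := by nlinarith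
  have h4 : u j ≤ 1 := by nlinarith
  omega

lemma master {r : ℕ} (f : Fin r → ℤ) (c : ℤ) (l : List ℤ) (hlen : l.length ≤ r)
    (hu : ∀ j, f j + c = -1 ∨ f j + c = 0 ∨ f j + c = 1)
    (A B C : ℤ)
    (hA : cnt (fun j => f j + c) (-1) = A)
    (hB : cnt (fun j => f j + c) 0 = B)
    (hC : cnt (fun j => f j + c) 1 = C)
    (hmatch : ∀ v : ℤ,
      (if v + c = -1 then A else if v + c = 0 then B else if v + c = 1 then C else 0) =
        (l.map fun x => if x = v then (1:ℤ) else 0).sum +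
          ((r : ℤ) - l.length) * (if (0:ℤ) = v then 1 else 0)) :
    ∃ σ : Equiv.Perm (Fin r), ∀ j, f j = l.getD ((σ j : ℕ)) 0 := by
  apply exists_perm_of_cnt f (fun j => l.getD ((j : Fin r) : ℕ) 0)
  intro v
  have hg : cnt (fun j : Fin r => l.getD (j : ℕ) 0) v =
      (l.map fun x => if x = v then (1:ℤ) else 0).sum +
        ((r : ℤ) - l.length) * (if (0:ℤ) = v then 1 else 0) :=
    sum_getD (fun x => if x = v then (1:ℤ) else 0) l r hlen
  rw [hg, ← hmatch v]
  by_cases h1 : v + c = -1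
  · rw [if_pos h1, cnt_shift f c v, h1, hA]
  · rw [if_neg h1]
    by_cases h2 : v + c = 0
    · rw [if_pos h2, cnt_shift f c v, h2, hB]
    · rw [if_neg h2]
      by_cases h3 : v + c = 1
      · rw [if_pos h3, cnt_shift f c v, h3, hC]
      · rw [if_neg h3]
        exact cnt_eq_zero f v fun j => by rcases hu j with h' | h' | h' <;> omega

lemma pm_counts' {r : ℕ} (u : Fin r → ℤ) (h : ∀ j, u j = -1 ∨ u j = 0 ∨ u j = 1)
    (Su Sq : ℤ) (hSu : ∑ j, u j = Su) (hSq : ∑ j, u j * u j = Sq) :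
    cnt u (-1) + cnt u 0 + cnt u 1 = r ∧
    cnt u 1 - cnt u (-1) = Su ∧
    cnt u 1 + cnt u (-1) = Sq := by
  obtain ⟨h1, h2, h3⟩ := pm_counts u h
  exact ⟨h1, by rw [h2, hSu], by rw [h3, hSq]⟩

lemma exceptional_of {r : ℕ} (D : Fin (r+1) → ℤ) (a : ℤ) (l : List ℤ) (hlen : l.length ≤ r)
    (σ : Equiv.Perm (Fin r)) (h0 : D 0 = a)
    (hj : ∀ j : Fin r, D j.succ = l.getD ((σ j : ℕ)) 0)
    (hsq : (l.map (fun x => x * x)).sum = a * a + 1)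
    (hsum : l.sum = 1 - 3 * a) : Exceptional D := by
  have key : ∀ F : ℤ → ℤ, ∑ j : Fin r, F (D j.succ) = (l.map F).sum + ((r : ℤ) - l.length) * F 0 := by
    intro F
    calc ∑ j : Fin r, F (D j.succ) = ∑ j : Fin r, F (l.getD ((σ j : ℕ)) 0) :=
          Finset.sum_congr rfl fun j _ => by rw [hj j]
      _ = ∑ j : Fin r, F (l.getD ((j : ℕ)) 0) := Equiv.sum_comp σ (fun j : Fin r => F (l.getD ((j : ℕ)) 0))
      _ = _ := sum_getD F l r hlen
  constructor
  · show D 0 * D 0 - ∑ j : Fin r, D j.succ * D j.succ = -1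
    have := key (fun x => x * x)
    rw [this, hsq, h0]
    ring
  · show Kc r 0 * D 0 - ∑ j : Fin r, Kc r j.succ * D j.succ = -1
    have e0 : Kc r 0 = -3 := by simp [Kc]
    have hsucc : ∑ j : Fin r, Kc r j.succ * D j.succ = ∑ j : Fin r, D j.succ :=
      Finset.sum_congr rfl fun j _ => by simp [Kc, Fin.succ_ne_zero]
    have := key id
    simp only [id, List.map_id] at this
    rw [e0, hsucc, this, hsum, h0]
    ring

set_option maxHeartbeats 2000000 in
/-- For `0 ≤ r ≤ 8`, a class `D ∈ Λ_r` is exceptional if and only if it is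
obtained by permuting the last `r` coordinates (and padding with zeros) of one
of the base vectors that fits in `r + 1` coordinates. -/
theorem exceptional_classification (r : ℕ) (hr : r ≤ 8) (D : Fin (r + 1) → ℤ) :
    Exceptional D ↔
      ∃ p ∈ baseVectors, p.2.length ≤ r ∧
        ∃ σ : Equiv.Perm (Fin r),
          D 0 = p.1 ∧ ∀ j : Fin r, D j.succ = p.2.getD (σ j : ℕ) 0 := by
  constructor
  · rintro ⟨h1, h2⟩
    obtain ⟨a, ha⟩ : ∃ a, D 0 = a := ⟨_, rfl⟩
    obtain ⟨f, hf⟩ : ∃ f : Fin r → ℤ, f = fun j => D j.succ := ⟨_, rfl⟩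
    have hfj : ∀ j, D j.succ = f j := fun j => by rw [hf]
    have hq : (∑ j, f j * f j) = a * a + 1 := by
      have h1' : D 0 * D 0 - ∑ j : Fin r, D j.succ * D j.succ = -1 := h1
      rw [ha, Finset.sum_congr rfl fun (j : Fin r) _ =>
        (by rw [hfj j] : D j.succ * D j.succ = f j * f j)] at h1'
      linarith
    have hs : (∑ j, f j) = 1 - 3 * a := by
      have h2' : Kc r 0 * D 0 - ∑ j : Fin r, Kc r j.succ * D j.succ = -1 := h2
      have e0 : Kc r 0 = -3 := by simp [Kc]
      have hsucc : ∑ j : Fin r, Kc r j.succ * D j.succ = ∑ j : Fin r, f j :=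
        Finset.sum_congr rfl fun j _ => by simp [Kc, Fin.succ_ne_zero, hfj j]
      rw [e0, hsucc, ha] at h2'
      linarith
    have hr8 : (r : ℤ) ≤ 8 := by exact_mod_cast hr
    -- Cauchy–Schwarz gives −1 ≤ a ≤ 7
    have hcs : (∑ j, f j) ^ 2 ≤ (r : ℤ) * ∑ j, f j * f j := by
      have h := sq_sum_le_card_mul_sum_sq (s := (univ : Finset (Fin r))) (f := f)
      have hsq : (∑ j, f j ^ 2) = ∑ j, f j * f j :=
        Finset.sum_congr rfl fun j _ => by ring
      simpa [Finset.card_univ, hsq] using h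
    rw [hs, hq] at hcs
    have hqpos : (0:ℤ) ≤ a * a + 1 := by nlinarith [mul_self_nonneg a]
    have hb1 : -1 ≤ a := by nlinarith [sq_nonneg (a + 1)]
    have hb2 : a ≤ 7 := by nlinarith [sq_nonneg (a - 7)]
    interval_cases a
    · exfalso
      have hSu : (∑ j, (f j + 0)) = (4:ℤ) := by rw [sum_shift, hs]; ring
      have hSq : (∑ j, (f j + 0) * (f j + 0)) = (2:ℤ) := by rw [sum_sq_shift, hq, hs]; ring
      have hu := pm_of_sum_sq (fun j => f j + 0) ((2:ℤ)) (by omega) hSq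
      obtain ⟨hABC, hCA, hCAq⟩ := pm_counts' (fun j => f j + 0) hu _ _ hSu hSq
      have h1 := cnt_nonneg (fun j => f j + 0) (-1)
      have h2 := cnt_nonneg (fun j => f j + 0) 1
      linarith
    · -- a = 0
      have hSu : (∑ j, (f j + 0)) = (1:ℤ) := by rw [sum_shift, hs]; ring
      have hSq : (∑ j, (f j + 0) * (f j + 0)) = (1:ℤ) := by rw [sum_sq_shift, hq, hs]; ring
      have hu := pm_of_sum_sq (fun j => f j + 0) _ (by omega) hSq
      obtain ⟨hABC, hCA, hCAq⟩ := pm_counts' (fun j => f j + 0) hu _ _ hSu hSq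
      have h1 := cnt_nonneg (fun j => f j + 0) (-1)
      have h2 := cnt_nonneg (fun j => f j + 0) 0
      have h3 := cnt_nonneg (fun j => f j + 0) 1
      have hrge : (1:ℤ) ≤ (r:ℤ) := by linarith
      have hA : cnt (fun j => f j + 0) (-1) = 0 := by linarith
      have hB : cnt (fun j => f j + 0) 0 = (r:ℤ) - 1 := by linarith
      have hC : cnt (fun j => f j + 0) 1 = 1 := by linarith
      have hu' : ∀ j, f j + 0 = -1 ∨ f j + 0 = 0 ∨ f j + 0 = 1 := hu
      obtain ⟨σ, hσ⟩ := master f 0 [1] (by simp; omega) hu' _ _ _ hA hB hC (by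
        intro v
        simp only [List.map_cons, List.map_nil, List.sum_cons, List.sum_nil, List.length_cons,
          List.length_nil]
        push_cast
        split_ifs <;> omega)
      exact ⟨(0, [1]), by simp [baseVectors], by simp; omega, σ, ha, fun j => by rw [hfj j, hσ j]⟩
    · -- a = 1
      have hSu : (∑ j, (f j + 0)) = (-2:ℤ) := by rw [sum_shift, hs]; ring
      have hSq : (∑ j, (f j + 0) * (f j + 0)) = (2:ℤ) := by rw [sum_sq_shift, hq, hs]; ring
      have hu := pm_of_sum_sq (fun j => f j + 0) _ (by omega) hSq
      obtain ⟨hABC, hCA, hCAq⟩ := pm_counts' (fun j => f j + 0) hu _ _ hSu hSq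
      have h1 := cnt_nonneg (fun j => f j + 0) (-1)
      have h2 := cnt_nonneg (fun j => f j + 0) 0
      have h3 := cnt_nonneg (fun j => f j + 0) 1
      have hrge : (2:ℤ) ≤ (r:ℤ) := by linarith
      have hA : cnt (fun j => f j + 0) (-1) = 2 := by linarith
      have hB : cnt (fun j => f j + 0) 0 = (r:ℤ) - 2 := by linarith
      have hC : cnt (fun j => f j + 0) 1 = 0 := by linarith
      have hu' : ∀ j, f j + 0 = -1 ∨ f j + 0 = 0 ∨ f j + 0 = 1 := hu
      obtain ⟨σ, hσ⟩ := master f 0 [-1, -1] (by simp; omega) hu' _ _ _ hA hB hC (by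
        intro v
        simp only [List.map_cons, List.map_nil, List.sum_cons, List.sum_nil, List.length_cons,
          List.length_nil]
        push_cast
        split_ifs <;> omega)
      exact ⟨(1, [-1, -1]), by simp [baseVectors], by simp; omega, σ, ha, fun j => by rw [hfj j, hσ j]⟩
    · -- a = 2
      have hSu : (∑ j, (f j + 1)) = (r:ℤ) - 5 := by rw [sum_shift, hs]; ring
      have hSq : (∑ j, (f j + 1) * (f j + 1)) = (r:ℤ) - 5 := by rw [sum_sq_shift, hq, hs]; ring
      have hu := pm_of_sum_sq (fun j => f j + 1) _ (by omega) hSq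
      obtain ⟨hABC, hCA, hCAq⟩ := pm_counts' (fun j => f j + 1) hu _ _ hSu hSq
      have h1 := cnt_nonneg (fun j => f j + 1) (-1)
      have h2 := cnt_nonneg (fun j => f j + 1) 0
      have h3 := cnt_nonneg (fun j => f j + 1) 1
      have hrge : (5:ℤ) ≤ (r:ℤ) := by linarith
      have hA : cnt (fun j => f j + 1) (-1) = 0 := by linarith
      have hB : cnt (fun j => f j + 1) 0 = 5 := by linarith
      have hC : cnt (fun j => f j + 1) 1 = (r:ℤ) - 5 := by linarith
      have hu' : ∀ j, f j + 1 = -1 ∨ f j + 1 = 0 ∨ f j + 1 = 1 := hu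
      obtain ⟨σ, hσ⟩ := master f 1 [-1, -1, -1, -1, -1] (by simp; omega) hu' _ _ _ hA hB hC (by
        intro v
        simp only [List.map_cons, List.map_nil, List.sum_cons, List.sum_nil, List.length_cons,
          List.length_nil]
        push_cast
        split_ifs <;> omega)
      exact ⟨(2, [-1, -1, -1, -1, -1]), by simp [baseVectors], by simp; omega, σ, ha, fun j => by rw [hfj j, hσ j]⟩
    · -- a = 3
      have hSu : (∑ j, (f j + 1)) = (r:ℤ) - 8 := by rw [sum_shift, hs]; ring
      have hSq : (∑ j, (f j + 1) * (f j + 1)) = (r:ℤ) - 6 := by rw [sum_sq_shift, hq, hs]; ring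
      have hu := pm_of_sum_sq (fun j => f j + 1) _ (by omega) hSq
      obtain ⟨hABC, hCA, hCAq⟩ := pm_counts' (fun j => f j + 1) hu _ _ hSu hSq
      have h1 := cnt_nonneg (fun j => f j + 1) (-1)
      have h2 := cnt_nonneg (fun j => f j + 1) 0
      have h3 := cnt_nonneg (fun j => f j + 1) 1
      have hrge : (7:ℤ) ≤ (r:ℤ) := by linarith
      have hA : cnt (fun j => f j + 1) (-1) = 1 := by linarith
      have hB : cnt (fun j => f j + 1) 0 = 6 := by linarith
      have hC : cnt (fun j => f j + 1) 1 = (r:ℤ) - 7 := by linarith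
      have hu' : ∀ j, f j + 1 = -1 ∨ f j + 1 = 0 ∨ f j + 1 = 1 := hu
      obtain ⟨σ, hσ⟩ := master f 1 [-2, -1, -1, -1, -1, -1, -1] (by simp; omega) hu' _ _ _ hA hB hC (by
        intro v
        simp only [List.map_cons, List.map_nil, List.sum_cons, List.sum_nil, List.length_cons,
          List.length_nil]
        push_cast
        split_ifs <;> omega)
      exact ⟨(3, [-2, -1, -1, -1, -1, -1, -1]), by simp [baseVectors], by simp; omega, σ, ha, fun j => by rw [hfj j, hσ j]⟩
    · -- a = 4
      have hSu : (∑ j, (f j + 1)) = (r:ℤ) - 11 := by rw [sum_shift, hs]; ring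
      have hSq : (∑ j, (f j + 1) * (f j + 1)) = (r:ℤ) - 5 := by rw [sum_sq_shift, hq, hs]; ring
      have hu := pm_of_sum_sq (fun j => f j + 1) _ (by omega) hSq
      obtain ⟨hABC, hCA, hCAq⟩ := pm_counts' (fun j => f j + 1) hu _ _ hSu hSq
      have h1 := cnt_nonneg (fun j => f j + 1) (-1)
      have h2 := cnt_nonneg (fun j => f j + 1) 0
      have h3 := cnt_nonneg (fun j => f j + 1) 1
      have hrge : (8:ℤ) ≤ (r:ℤ) := by linarith
      have hre : r = 8 := by omega
      have hA : cnt (fun j => f j + 1) (-1) = 3 := by linarith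
      have hB : cnt (fun j => f j + 1) 0 = 5 := by linarith
      have hC : cnt (fun j => f j + 1) 1 = 0 := by linarith
      have hu' : ∀ j, f j + 1 = -1 ∨ f j + 1 = 0 ∨ f j + 1 = 1 := hu
      obtain ⟨σ, hσ⟩ := master f 1 [-2, -2, -2, -1, -1, -1, -1, -1] (by simp; omega) hu' _ _ _ hA hB hC (by
        intro v
        simp only [List.map_cons, List.map_nil, List.sum_cons, List.sum_nil, List.length_cons,
          List.length_nil]
        push_cast
        split_ifs <;> omega)
      exact ⟨(4, [-2, -2, -2, -1, -1, -1, -1, -1]), by simp [baseVectors], by simp; omega, σ, ha, fun j => by rw [hfj j, hσ j]⟩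
    · -- a = 5
      have hSu : (∑ j, (f j + 2)) = 2 * (r:ℤ) - 14 := by rw [sum_shift, hs]; ring
      have hSq : (∑ j, (f j + 2) * (f j + 2)) = 4 * (r:ℤ) - 30 := by rw [sum_sq_shift, hq, hs]; ring
      have hu := pm_of_sum_sq (fun j => f j + 2) _ (by omega) hSq
      obtain ⟨hABC, hCA, hCAq⟩ := pm_counts' (fun j => f j + 2) hu _ _ hSu hSq
      have h1 := cnt_nonneg (fun j => f j + 2) (-1)
      have h2 := cnt_nonneg (fun j => f j + 2) 0
      have h3 := cnt_nonneg (fun j => f j + 2) 1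
      have hrge : (8:ℤ) ≤ (r:ℤ) := by linarith
      have hre : r = 8 := by omega
      have hA : cnt (fun j => f j + 2) (-1) = 0 := by linarith
      have hB : cnt (fun j => f j + 2) 0 = 6 := by linarith
      have hC : cnt (fun j => f j + 2) 1 = 2 := by linarith
      have hu' : ∀ j, f j + 2 = -1 ∨ f j + 2 = 0 ∨ f j + 2 = 1 := hu
      obtain ⟨σ, hσ⟩ := master f 2 [-2, -2, -2, -2, -2, -2, -1, -1] (by simp; omega) hu' _ _ _ hA hB hC (by
        intro v
        simp only [List.map_cons, List.map_nil, List.sum_cons, List.sum_nil, List.length_cons,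
          List.length_nil]
        push_cast
        split_ifs <;> omega)
      exact ⟨(5, [-2, -2, -2, -2, -2, -2, -1, -1]), by simp [baseVectors], by simp; omega, σ, ha, fun j => by rw [hfj j, hσ j]⟩
    · -- a = 6
      have hSu : (∑ j, (f j + 2)) = 2 * (r:ℤ) - 17 := by rw [sum_shift, hs]; ring
      have hSq : (∑ j, (f j + 2) * (f j + 2)) = 4 * (r:ℤ) - 31 := by rw [sum_sq_shift, hq, hs]; ring
      have hu := pm_of_sum_sq (fun j => f j + 2) _ (by omega) hSq
      obtain ⟨hABC, hCA, hCAq⟩ := pm_counts' (fun j => f j + 2) hu _ _ hSu hSq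
      have h1 := cnt_nonneg (fun j => f j + 2) (-1)
      have h2 := cnt_nonneg (fun j => f j + 2) 0
      have h3 := cnt_nonneg (fun j => f j + 2) 1
      have hrge : (8:ℤ) ≤ (r:ℤ) := by linarith
      have hre : r = 8 := by omega
      have hA : cnt (fun j => f j + 2) (-1) = 1 := by linarith
      have hB : cnt (fun j => f j + 2) 0 = 7 := by linarith
      have hC : cnt (fun j => f j + 2) 1 = 0 := by linarith
      have hu' : ∀ j, f j + 2 = -1 ∨ f j + 2 = 0 ∨ f j + 2 = 1 := hu
      obtain ⟨σ, hσ⟩ := master f 2 [-3, -2, -2, -2, -2, -2, -2, -2] (by simp; omega) hu' _ _ _ hA hB hC (by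
        intro v
        simp only [List.map_cons, List.map_nil, List.sum_cons, List.sum_nil, List.length_cons,
          List.length_nil]
        push_cast
        split_ifs <;> omega)
      exact ⟨(6, [-3, -2, -2, -2, -2, -2, -2, -2]), by simp [baseVectors], by simp; omega, σ, ha, fun j => by rw [hfj j, hσ j]⟩
    · exfalso
      have hSu : (∑ j, (f j + 2)) = 2 * (r:ℤ) - 20 := by rw [sum_shift, hs]; ring
      have hSq : (∑ j, (f j + 2) * (f j + 2)) = 4 * (r:ℤ) - 30 := by rw [sum_sq_shift, hq, hs]; ring
      have hu := pm_of_sum_sq (fun j => f j + 2) (4 * (r:ℤ) - 30) (by omega) hSq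
      obtain ⟨hABC, hCA, hCAq⟩ := pm_counts' (fun j => f j + 2) hu _ _ hSu hSq
      have h1 := cnt_nonneg (fun j => f j + 2) (-1)
      have h2 := cnt_nonneg (fun j => f j + 2) 1
      linarith
  · rintro ⟨p, hp, hlen, σ, h0, hj⟩
    simp only [baseVectors, List.mem_cons, List.not_mem_nil, or_false] at hp
    rcases hp with rfl | rfl | rfl | rfl | rfl | rfl | rfl
    · exact exceptional_of D 0 [1] (by simpa using hlen) σ h0 hj
        (by norm_num [List.map_cons, List.sum_cons]) (by norm_num [List.sum_cons])
    · exact exceptional_of D 1 [-1, -1] (by simpa using hlen) σ h0 hj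
        (by norm_num [List.map_cons, List.sum_cons]) (by norm_num [List.sum_cons])
    · exact exceptional_of D 2 [-1, -1, -1, -1, -1] (by simpa using hlen) σ h0 hj
        (by norm_num [List.map_cons, List.sum_cons]) (by norm_num [List.sum_cons])
    · exact exceptional_of D 3 [-2, -1, -1, -1, -1, -1, -1] (by simpa using hlen) σ h0 hj
        (by norm_num [List.map_cons, List.sum_cons]) (by norm_num [List.sum_cons])
    · exact exceptional_of D 4 [-2, -2, -2, -1, -1, -1, -1, -1] (by simpa using hlen) σ h0 hj
        (by norm_num [List.map_cons, List.sum_cons]) (by norm_num [List.sum_cons])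
    · exact exceptional_of D 5 [-2, -2, -2, -2, -2, -2, -1, -1] (by simpa using hlen) σ h0 hj
        (by norm_num [List.map_cons, List.sum_cons]) (by norm_num [List.sum_cons])
    · exact exceptional_of D 6 [-3, -2, -2, -2, -2, -2, -2, -2] (by simpa using hlen) σ h0 hj
        (by norm_num [List.map_cons, List.sum_cons]) (by norm_num [List.sum_cons])
end

section
/- For 3 ≤ r ≤ 8, the number of conics in the lattice Λ_r is: 3 for r = 3, 5 for r = 4, 10 for r = 5, 27 for r = 6, 126 for r = 7, and 2160 for r = 8. -/
/-! ### Generic algebra of the pairing -/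

lemma pair_comm {r : ℕ} (x y : Fin (r + 1) → ℤ) : pair x y = pair y x := by
  simp only [pair, mul_comm]

lemma pair_KK {r : ℕ} : pair (Kc r) (Kc r) = 9 - (r : ℤ) := by
  simp [pair, Kc, Fin.succ_ne_zero, Finset.sum_const, Finset.card_univ]

lemma pair_lin_right {r : ℕ} (α β γ : ℤ) (Z Q K E : Fin (r + 1) → ℤ) :
    pair Z (fun i => α * Q i + β * K i + γ * E i)
      = α * pair Z Q + β * pair Z K + γ * pair Z E := by
  simp only [pair]
  rw [Finset.sum_congr rfl (fun i _ => (by ring :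
    Z i.succ * (α * Q i.succ + β * K i.succ + γ * E i.succ)
      = α * (Z i.succ * Q i.succ) + (β * (Z i.succ * K i.succ)
        + γ * (Z i.succ * E i.succ))))]
  rw [Finset.sum_add_distrib, Finset.sum_add_distrib, ← Finset.mul_sum, ← Finset.mul_sum,
    ← Finset.mul_sum]
  ring

lemma pair_comb {r : ℕ} (α β γ : ℤ) (Q K E : Fin (r + 1) → ℤ) :
    pair (fun i => α * Q i + β * K i + γ * E i) (fun i => α * Q i + β * K i + γ * E i)
      = α * α * pair Q Q + β * β * pair K K + γ * γ * pair E E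
        + 2 * α * β * pair Q K + 2 * α * γ * pair Q E + 2 * β * γ * pair K E := by
  have h1 := pair_lin_right (r := r) α β γ Q Q K E
  have h2 := pair_lin_right (r := r) α β γ K Q K E
  have h3 := pair_lin_right (r := r) α β γ E Q K E
  have h4 := pair_lin_right (r := r) α β γ (fun i => α * Q i + β * K i + γ * E i) Q K E
  rw [h4, pair_comm _ Q, pair_comm _ K, pair_comm _ E, h1, h2, h3,
    pair_comm K Q, pair_comm E Q, pair_comm E K]
  ring

lemma pair_K_left {r : ℕ} (u : Fin (r + 1) → ℤ) :
    pair (Kc r) u = -3 * u 0 - ∑ i : Fin r, u i.succ := by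
  simp [pair, Kc, Fin.succ_ne_zero]

set_option maxHeartbeats 1000000 in
/-- The key positivity lemma: a numerical conic class is automatically nef when `r ≤ 8`. -/
theorem numeric_nef {r : ℕ} (h1r : 1 ≤ r) (h8 : r ≤ 8) (Q : Fin (r + 1) → ℤ)
    (hQQ : pair Q Q = 0) (hKQ : pair (Kc r) Q = -2) : Nef Q := by
  intro E hE
  obtain ⟨hEE, hKE⟩ := hE
  by_contra hneg
  push_neg at hneg
  set x := pair Q E with hx
  have hxle : x ≤ -1 := by omega
  have hr8 : (r : ℤ) ≤ 8 := by exact_mod_cast h8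
  have hr1 : (1 : ℤ) ≤ (r : ℤ) := by exact_mod_cast h1r
  set s : ℤ := 9 - (r : ℤ) with hs
  have hs1 : 1 ≤ s := by omega
  set α : ℤ := s * (s + 1) with hα
  set β : ℤ := 2 * (s + 1) + (s * x - 2) with hβ
  set γ : ℤ := s * (s * x - 2) with hγ
  set u : Fin (r + 1) → ℤ := fun i => α * Q i + β * Kc r i + γ * E i with hu
  have hKu : pair (Kc r) u = 0 := by
    rw [hu, pair_lin_right, hKQ, pair_KK, hKE]
    rw [hα, hβ, hγ]; ring
  have huu : pair u u = -4 * s * (s + 1) ^ 2 + s * (s + 1) * (s * x - 2) ^ 2 := by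
    rw [hu, pair_comb, hQQ, pair_KK, hEE, pair_comm Q (Kc r), hKQ, ← hx, hKE]
    rw [hα, hβ, hγ, hs]; ring
  -- u is orthogonal to K, hence pair u u ≤ 0 by Cauchy–Schwarz
  have hsum : ∑ i : Fin r, u i.succ = -3 * u 0 - 0 := by
    rw [pair_K_left] at hKu; omega
  have hC : (∑ i : Fin r, u i.succ) ^ 2 ≤ (r : ℤ) * ∑ i : Fin r, u i.succ ^ 2 := by
    have := sq_sum_le_card_mul_sum_sq (s := (Finset.univ : Finset (Fin r)))
      (f := fun i => u i.succ)
    simpa using this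
  have hpuu : (r : ℤ) * pair u u ≤ 0 := by
    have hpu : pair u u = u 0 * u 0 - ∑ i : Fin r, u i.succ * u i.succ := rfl
    have h9 : (∑ i : Fin r, u i.succ) ^ 2 = 9 * (u 0 * u 0) := by rw [hsum]; ring
    have hsq : ∑ i : Fin r, u i.succ ^ 2 = ∑ i : Fin r, u i.succ * u i.succ := by
      apply Finset.sum_congr rfl; intro i _; ring
    rw [hsq, h9] at hC
    nlinarith [hC, sq_nonneg (u 0)]
  have huu0 : pair u u ≤ 0 := by nlinarith [hpuu, hr1]
  rw [huu] at huu0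
  -- now derive a contradiction
  have hsp : (0:ℤ) < s * (s + 1) := by nlinarith [hs1]
  have hkey : (s * x - 2) ^ 2 ≤ 4 * (s + 1) := by nlinarith [huu0, hsp]
  have h2 : s * x - 2 ≤ -(s + 2) := by nlinarith [hs1, hxle]
  nlinarith [hkey, h2, hs1]

/-! ### Enumeration of solutions -/

/-- All lists of `n` integers in `[-11,0]` with sum `-m` and sum of squares `b`. -/
def tails : ℕ → ℕ → ℕ → List (List ℤ)
  | 0, m, b => if m = 0 ∧ b = 0 then [[]] else []
  | n+1, m, b =>
    if m*m > (n+1)*b then [] else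
    (List.range 12).flatMap fun k =>
      if k ≤ m ∧ k*k ≤ b then (tails n (m-k) (b-k*k)).map ((-(k:ℤ)) :: ·) else []

def tcount : ℕ → ℕ → ℕ → ℕ
  | 0, m, b => if m = 0 ∧ b = 0 then 1 else 0
  | n+1, m, b =>
    if m*m > (n+1)*b then 0 else
    ((List.range 12).map fun (k : ℕ) =>
      if k ≤ m ∧ k*k ≤ b then tcount n (m-k) (b-k*k) else 0).sum

def sols (r : ℕ) : List (List ℤ) :=
  (List.range 11).flatMap fun k =>
    ((tails r (3*(k+1) - 2) ((k+1)*(k+1))).map (((k:ℤ)+1) :: ·))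

def scount (r : ℕ) : ℕ :=
  ((List.range 11).map fun (k : ℕ) => tcount r (3*(k+1) - 2) ((k+1)*(k+1))).sum

lemma tails_length : ∀ (n : ℕ) (m b : ℕ), (tails n m b).length = tcount n m b := by
  intro n
  induction n with
  | zero => intro m b; unfold tails tcount; split <;> rfl
  | succ n ih =>
    intro m b
    unfold tails tcount
    split
    · rfl
    · rw [List.length_flatMap]
      congr 1
      apply List.map_congr_left
      intro k _
      split
      · rw [List.length_map, ih]
      · rfl

lemma sols_length (r : ℕ) : (sols r).length = scount r := by
  rw [sols, scount, List.length_flatMap]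
  congr 1
  apply List.map_congr_left
  intro k _
  rw [List.length_map, tails_length]

lemma sqsum_nonneg (l : List ℤ) : 0 ≤ (l.map fun x => x*x).sum := by
  induction l with
  | nil => simp
  | cons x t ih => simp only [List.map_cons, List.sum_cons]; nlinarith [sq_nonneg x, ih]

lemma sum_nonpos (l : List ℤ) (h : ∀ x ∈ l, x ≤ 0) : l.sum ≤ 0 := by
  induction l with
  | nil => simp
  | cons x t ih =>
    simp only [List.sum_cons]
    have h1 := h x (by simp)
    have h2 : t.sum ≤ 0 := ih (fun y hy => h y (by simp [hy]))
    omega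

lemma list_cauchy (l : List ℤ) : l.sum * l.sum ≤ (l.length : ℤ) * (l.map fun x => x*x).sum := by
  have h1 : l.sum = ∑ i : Fin l.length, l.get i := by
    conv_lhs => rw [← List.ofFn_get l]
    rw [List.sum_ofFn]
  have h2 : (l.map fun x => x*x).sum = ∑ i : Fin l.length, (l.get i)*(l.get i) := by
    conv_lhs => rw [← List.ofFn_get l]
    rw [List.map_ofFn, List.sum_ofFn]
    rfl
  rw [h1, h2]
  have h := sq_sum_le_card_mul_sum_sq (s := (Finset.univ : Finset (Fin l.length)))
    (f := fun i => l.get i)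
  simp only [pow_two, Finset.card_univ, Fintype.card_fin] at h
  exact_mod_cast h

lemma tails_sound : ∀ (n m b : ℕ) (l : List ℤ), l ∈ tails n m b →
    l.length = n ∧ l.sum = -(m : ℤ) ∧ (l.map fun x => x*x).sum = (b : ℤ)
      ∧ ∀ x ∈ l, -11 ≤ x ∧ x ≤ 0 := by
  intro n
  induction n with
  | zero =>
    intro m b l hl
    unfold tails at hl
    split at hl
    · rename_i hmb
      simp only [List.mem_singleton] at hl
      subst hl
      refine ⟨rfl, ?_, ?_, by simp⟩ <;> simp [hmb.1, hmb.2]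
    · simp at hl
  | succ n ih =>
    intro m b l hl
    unfold tails at hl
    split at hl
    · simp at hl
    · rw [List.mem_flatMap] at hl
      obtain ⟨k, hk, hl⟩ := hl
      rw [List.mem_range] at hk
      split at hl
      · rename_i hkm
        rw [List.mem_map] at hl
        obtain ⟨t, ht, rfl⟩ := hl
        obtain ⟨hlen, hsum, hsq, hbd⟩ := ih (m-k) (b-k*k) t ht
        have hc1 : ((m - k : ℕ) : ℤ) = (m : ℤ) - k := by
          have := hkm.1; push_cast [Nat.cast_sub this]; ring
        have hc2 : ((b - k*k : ℕ) : ℤ) = (b : ℤ) - k*k := by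
          have := hkm.2; push_cast [Nat.cast_sub this]; ring
        refine ⟨by simp [hlen], ?_, ?_, ?_⟩
        · simp only [List.sum_cons, hsum, hc1]; ring
        · simp only [List.map_cons, List.sum_cons, hsq, hc2]; ring
        · intro x hx
          rcases List.mem_cons.1 hx with rfl | hx
          · constructor <;> omega
          · exact hbd x hx
      · simp at hl

lemma tails_complete : ∀ (l : List ℤ) (m b : ℕ), (∀ x ∈ l, -11 ≤ x ∧ x ≤ 0) →
    l.sum = -(m : ℤ) → (l.map fun x => x*x).sum = (b : ℤ) → l ∈ tails l.length m b := by
  intro l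
  induction l with
  | nil =>
    intro m b _ hsum hsq
    simp only [List.sum_nil] at hsum
    simp only [List.map_nil, List.sum_nil] at hsq
    have hm : m = 0 := by omega
    have hb : b = 0 := by omega
    subst hm; subst hb
    simp [tails]
  | cons x t ih =>
    intro m b hbd hsum hsq
    simp only [List.sum_cons] at hsum
    simp only [List.map_cons, List.sum_cons] at hsq
    have hx := hbd x (by simp)
    have htb : ∀ y ∈ t, -11 ≤ y ∧ y ≤ 0 := fun y hy => hbd y (by simp [hy])
    -- the Cauchy pruning condition is satisfied
    have hcs := list_cauchy (x :: t)
    simp only [List.sum_cons, List.map_cons, List.length_cons] at hcs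
    rw [hsum] at hcs
    have hsq' : (0:ℤ) ≤ (t.map fun y => y*y).sum := sqsum_nonneg t
    have hts : t.sum ≤ 0 := sum_nonpos t (fun y hy => (htb y hy).2)
    have hcond : ¬ (m*m > (t.length+1)*b) := by
      rw [not_lt, ← Nat.cast_le (α := ℤ)]
      push_cast
      push_cast at hcs
      rw [hsq] at hcs
      nlinarith [hcs]
    set k : ℕ := (-x).toNat with hk
    have hkx : (k : ℤ) = -x := Int.toNat_of_nonneg (by omega)
    have hkm : k ≤ m := by
      rw [← Nat.cast_le (α := ℤ), hkx]; omega
    have hkb : k*k ≤ b := by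
      rw [← Nat.cast_le (α := ℤ)]; push_cast; nlinarith [hkx, hsq, hsq']
    have hc1 : ((m - k : ℕ) : ℤ) = (m : ℤ) - k := by push_cast [Nat.cast_sub hkm]; ring
    have hc2 : ((b - k*k : ℕ) : ℤ) = (b : ℤ) - k*k := by push_cast [Nat.cast_sub hkb]; ring
    have hmem : t ∈ tails t.length (m-k) (b-k*k) := by
      apply ih
      · exact htb
      · rw [hc1, hkx]; omega
      · rw [hc2, hkx]; nlinarith [hsq]
    show x :: t ∈ tails (t.length + 1) m b
    unfold tails
    rw [if_neg hcond, List.mem_flatMap]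
    refine ⟨k, ?_, ?_⟩
    · rw [List.mem_range]; omega
    · rw [if_pos ⟨hkm, hkb⟩, List.mem_map]
      exact ⟨t, hmem, by rw [hkx]; simp⟩

lemma tails_nodup : ∀ (n m b : ℕ), (tails n m b).Nodup := by
  intro n
  induction n with
  | zero =>
    intro m b; unfold tails; split <;> simp
  | succ n ih =>
    intro m b
    unfold tails
    split
    · simp
    · rw [List.nodup_flatMap]
      constructor
      · intro k _
        split
        · exact (ih _ _).map (fun a b h => by injection h)
        · simp
      · have hpw : (List.range 12).Pairwise (· < ·) := (List.pairwise_lt_range)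
        refine hpw.imp ?_
        intro k k' hkk'
        simp only [Function.onFun]
        intro l hl hl'
        exfalso
        have h1 : ∃ t, l = (-(k:ℤ)) :: t := by
          split at hl
          · rw [List.mem_map] at hl; obtain ⟨t, _, rfl⟩ := hl; exact ⟨t, rfl⟩
          · simp at hl
        have h2 : ∃ t, l = (-(k':ℤ)) :: t := by
          split at hl'
          · rw [List.mem_map] at hl'; obtain ⟨t, _, rfl⟩ := hl'; exact ⟨t, rfl⟩
          · simp at hl'
        obtain ⟨t1, rfl⟩ := h1
        obtain ⟨t2, heq⟩ := h2
        have : -(k:ℤ) = -(k':ℤ) := by injection heq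
        omega

lemma sols_nodup (r : ℕ) : (sols r).Nodup := by
  rw [sols, List.nodup_flatMap]
  constructor
  · intro k _
    exact (tails_nodup _ _ _).map (fun a b h => by injection h)
  · have hpw : (List.range 11).Pairwise (· < ·) := (List.pairwise_lt_range)
    refine hpw.imp ?_
    intro k k' hkk'
    simp only [Function.onFun]
    intro l hl hl'
    exfalso
    rw [List.mem_map] at hl hl'
    obtain ⟨t1, _, rfl⟩ := hl
    obtain ⟨t2, _, heq⟩ := hl'
    have : ((k':ℤ)+1) = ((k:ℤ)+1) := by injection heq
    omega

lemma sols_sound (r : ℕ) (l : List ℤ) (hl : l ∈ sols r) :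
    ∃ (d : ℤ) (t : List ℤ), l = d :: t ∧ 1 ≤ d ∧ t.length = r ∧
      t.sum = 2 - 3*d ∧ (t.map fun x => x*x).sum = d*d := by
  rw [sols, List.mem_flatMap] at hl
  obtain ⟨k, hk, hl⟩ := hl
  rw [List.mem_map] at hl
  obtain ⟨t, ht, rfl⟩ := hl
  obtain ⟨hlen, hsum, hsq, _⟩ := tails_sound _ _ _ t ht
  refine ⟨(k:ℤ)+1, t, rfl, by omega, hlen, ?_, ?_⟩
  · rw [hsum]; push_cast [Nat.cast_sub (by omega : 2 ≤ 3*(k+1))]; ring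
  · rw [hsq]; push_cast; ring

lemma sols_complete (r : ℕ) (hr8 : r ≤ 8) (d : ℤ) (t : List ℤ)
    (hlen : t.length = r) (hbd : ∀ x ∈ t, x ≤ 0)
    (hsum : t.sum = 2 - 3*d) (hsq : (t.map fun x => x*x).sum = d*d) :
    (d :: t) ∈ sols r := by
  have hts : t.sum ≤ 0 := sum_nonpos t hbd
  have hd1 : 1 ≤ d := by omega
  have hd11 : d ≤ 11 := by
    have hcs := list_cauchy t
    rw [hsum, hsq, hlen] at hcs
    have hr : (r : ℤ) ≤ 8 := by exact_mod_cast hr8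
    nlinarith [hcs, sq_nonneg d, mul_le_mul_of_nonneg_right hr (by nlinarith : (0:ℤ) ≤ d*d)]
  have hbd' : ∀ x ∈ t, -11 ≤ x ∧ x ≤ 0 := by
    intro x hx
    refine ⟨?_, hbd x hx⟩
    have hx2 : x*x ≤ d*d := by
      rw [← hsq]
      refine List.single_le_sum ?_ _ (List.mem_map_of_mem (f := fun y => y*y) hx)
      intro z hz
      rw [List.mem_map] at hz
      obtain ⟨y, _, rfl⟩ := hz
      exact mul_self_nonneg y
    nlinarith [hbd x hx, hx2, hd1, hd11]
  set kk : ℕ := (d - 1).toNat with hkk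
  have hkd : (kk : ℤ) = d - 1 := Int.toNat_of_nonneg (by omega)
  rw [sols, List.mem_flatMap]
  refine ⟨kk, by rw [List.mem_range]; omega, ?_⟩
  rw [List.mem_map]
  refine ⟨t, ?_, by rw [hkd]; ring_nf⟩
  have h1 : t.sum = -((3*(kk+1) - 2 : ℕ) : ℤ) := by
    rw [hsum]; push_cast [Nat.cast_sub (by omega : 2 ≤ 3*(kk+1))]; omega
  have h2 : (t.map fun x => x*x).sum = (((kk+1)*(kk+1) : ℕ) : ℤ) := by
    rw [hsq]; push_cast; nlinarith [hkd]
  have := tails_complete t (3*(kk+1) - 2) ((kk+1)*(kk+1)) hbd' h1 h2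
  rwa [hlen] at this

/-! ### From lists back to lattice points -/

def gg (r : ℕ) (l : List ℤ) : Fin (r + 1) → ℤ := fun i => l.getD i 0

lemma gg_ofFn {r : ℕ} (f : Fin (r + 1) → ℤ) : gg r (List.ofFn f) = f := by
  funext i
  have hi : (i : ℕ) < (List.ofFn f).length := by simp [i.isLt]
  rw [gg, List.getD_eq_getElem _ _ hi, List.getElem_ofFn]

lemma ofFn_gg {r : ℕ} (l : List ℤ) (h : l.length = r + 1) : List.ofFn (gg r l) = l := by
  apply List.ext_getElem (by simp [h])
  intro n h1 h2
  rw [List.getElem_ofFn]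
  show l.getD _ 0 = _
  rw [List.getD_eq_getElem _ _ (by simpa [h] using h2)]

lemma conic_iff {r : ℕ} (h3 : 3 ≤ r) (h8 : r ≤ 8) (Q : Fin (r + 1) → ℤ) :
    Conic Q ↔ List.ofFn Q ∈ sols r := by
  constructor
  · rintro ⟨hnef, hQQ, hKQ⟩
    rw [pair_K_left] at hKQ
    have hQ0 : ∑ i : Fin r, Q i.succ * Q i.succ = Q 0 * Q 0 := by
      rw [pair] at hQQ; linarith
    have hcoord : ∀ j : Fin r, Q j.succ ≤ 0 := by
      intro j
      set E : Fin (r + 1) → ℤ := fun k => if k = j.succ then 1 else 0 with hE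
      have hpairE : ∀ Z : Fin (r + 1) → ℤ, pair Z E = - Z j.succ := by
        intro Z
        simp [pair, hE, (Fin.succ_ne_zero j).symm, Fin.succ_inj, mul_ite]
      have hexc : Exceptional E := by
        constructor
        · have h1 := hpairE E
          rw [h1, hE]
          simp
        · rw [hpairE (Kc r)]
          simp [Kc, Fin.succ_ne_zero]
      have := hnef E hexc
      rw [hpairE Q] at this
      omega
    rw [List.ofFn_succ]
    apply sols_complete r h8 (Q 0) _ (by simp)
    · intro x hx
      rw [List.mem_ofFn] at hx
      obtain ⟨i, rfl⟩ := hx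
      exact hcoord i
    · rw [List.sum_ofFn]; omega
    · rw [List.map_ofFn, List.sum_ofFn]
      exact hQ0
  · intro hmem
    obtain ⟨d, t, heq, hd1, hlen, hsum, hsq⟩ := sols_sound r _ hmem
    rw [List.ofFn_succ] at heq
    have h0 : Q 0 = d := (List.cons.injEq _ _ _ _ ▸ heq).1
    have htail : List.ofFn (fun i : Fin r => Q i.succ) = t := (List.cons.injEq _ _ _ _ ▸ heq).2
    have hsum' : ∑ i : Fin r, Q i.succ = 2 - 3 * d := by
      rw [← List.sum_ofFn (f := fun i : Fin r => Q i.succ), htail]; exact hsum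
    have hsq' : ∑ i : Fin r, Q i.succ * Q i.succ = d * d := by
      have := congrArg (fun l => (List.map (fun x => x*x) l).sum) htail
      simpa [List.map_ofFn, List.sum_ofFn] using this.trans hsq
    have hQQ : pair Q Q = 0 := by
      rw [pair, hsq', h0]; ring
    have hKQ : pair (Kc r) Q = -2 := by
      rw [pair_K_left, hsum', h0]; ring
    exact ⟨numeric_nef (by omega) h8 Q hQQ hKQ, hQQ, hKQ⟩

def solsFinset (r : ℕ) : Finset (Fin (r + 1) → ℤ) :=
  ⟨((sols r).map (gg r) : List (Fin (r + 1) → ℤ)), by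
    rw [Multiset.coe_nodup]
    apply (sols_nodup r).map_on
    intro l1 h1 l2 h2 hgl
    obtain ⟨d1, t1, rfl, _, hlen1, _, _⟩ := sols_sound r _ h1
    obtain ⟨d2, t2, rfl, _, hlen2, _, _⟩ := sols_sound r _ h2
    calc d1 :: t1 = List.ofFn (gg r (d1 :: t1)) := (ofFn_gg _ (by simp [hlen1])).symm
      _ = List.ofFn (gg r (d2 :: t2)) := by rw [hgl]
      _ = d2 :: t2 := ofFn_gg _ (by simp [hlen2])⟩

lemma mem_solsFinset {r : ℕ} (Q : Fin (r + 1) → ℤ) :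
    Q ∈ solsFinset r ↔ List.ofFn Q ∈ sols r := by
  show Q ∈ ((sols r).map (gg r) : Multiset (Fin (r + 1) → ℤ)) ↔ _
  rw [Multiset.mem_coe, List.mem_map]
  constructor
  · rintro ⟨l, hl, rfl⟩
    obtain ⟨d, t, rfl, _, hlen, _, _⟩ := sols_sound r _ hl
    rwa [ofFn_gg (d :: t) (by simp [hlen])]
  · intro h
    exact ⟨_, h, gg_ofFn Q⟩

set_option maxRecDepth 20000 in
set_option maxHeartbeats 2000000 in
/-- The number of conics in `Λ_r` for `3 ≤ r ≤ 8` is `3, 5, 10, 27, 126, 2160`. -/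
theorem conic_count (r : ℕ) (h3 : 3 ≤ r) (h8 : r ≤ 8) :
    {Q : Fin (r + 1) → ℤ | Conic Q}.Finite ∧
    {Q : Fin (r + 1) → ℤ | Conic Q}.ncard =
      (match r with
       | 3 => 3 | 4 => 5 | 5 => 10 | 6 => 27 | 7 => 126 | _ => 2160) := by
  have hset : {Q : Fin (r + 1) → ℤ | Conic Q} = ↑(solsFinset r) := by
    ext Q
    rw [Set.mem_setOf_eq, Finset.mem_coe, mem_solsFinset, conic_iff h3 h8]
  have hcard : (solsFinset r).card = scount r := by
    have hv : (solsFinset r).val = ((sols r).map (gg r) : Multiset (Fin (r + 1) → ℤ)) := rfl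
    show Multiset.card (solsFinset r).val = scount r
    rw [hv, Multiset.coe_card, List.length_map, sols_length]
  constructor
  · rw [hset]; exact (solsFinset r).finite_toSet
  · rw [hset, Set.ncard_coe_finset, hcard]
    interval_cases r
    · show scount 3 = 3; decide
    · show scount 4 = 5; decide
    · show scount 5 = 10; decide
    · show scount 6 = 27; decide
    · show scount 7 = 126; decide
    · show scount 8 = 2160; decide
end

section
/- For 3 ≤ r ≤ 8 and any conic Q in Λ_r, the number of unordered pairs {E, E′} of exceptional classes in Λ_r with E + E′ = Q is exactly r − 1 (these pairs correspond to the r − 1 singular fibers of the conic fibration induced by Q). -/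
set_option linter.unusedSectionVars false
set_option linter.unusedVariables false

namespace ConicAux

variable {r : ℕ}

/-- the class of a line `ℓ`. -/
def lvec (r : ℕ) : Fin (r + 1) → ℤ := fun m => if m = 0 then 1 else 0

/-- the exceptional basis class `e_j`. -/
def ee (r : ℕ) (j : Fin r) : Fin (r + 1) → ℤ := fun m => if m = j.succ then 1 else 0

lemma pair_comm (x y : Fin (r + 1) → ℤ) : pair x y = pair y x := by
  unfold pair; rw [mul_comm]; congr 1; exact Finset.sum_congr rfl fun i _ => mul_comm _ _

lemma pair_add_left (x y z : Fin (r + 1) → ℤ) :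
    pair (x + y) z = pair x z + pair y z := by
  unfold pair
  simp only [Pi.add_apply, add_mul]
  rw [Finset.sum_add_distrib]; ring

lemma pair_add_right (x y z : Fin (r + 1) → ℤ) :
    pair x (y + z) = pair x y + pair x z := by
  rw [pair_comm, pair_add_left, pair_comm y x, pair_comm z x]

lemma pair_sub_left (x y z : Fin (r + 1) → ℤ) :
    pair (x - y) z = pair x z - pair y z := by
  unfold pair
  simp only [Pi.sub_apply, sub_mul]
  rw [Finset.sum_sub_distrib]; ring

lemma pair_sub_right (x y z : Fin (r + 1) → ℤ) :
    pair x (y - z) = pair x y - pair x z := by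
  rw [pair_comm, pair_sub_left, pair_comm y x, pair_comm z x]

lemma pair_smul_left (c : ℤ) (x y : Fin (r + 1) → ℤ) :
    pair (c • x) y = c * pair x y := by
  unfold pair
  simp only [Pi.smul_apply, smul_eq_mul, mul_assoc]
  rw [← Finset.mul_sum]; ring

lemma pair_smul_right (c : ℤ) (x y : Fin (r + 1) → ℤ) :
    pair x (c • y) = c * pair x y := by
  rw [pair_comm, pair_smul_left, pair_comm y x]

@[simp] lemma lvec_zero : lvec r 0 = 1 := rfl

@[simp] lemma lvec_succ (j : Fin r) : lvec r j.succ = 0 := by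
  simp [lvec, Fin.succ_ne_zero]

@[simp] lemma ee_zero (j : Fin r) : ee r j 0 = 0 := by
  simp [ee, (Fin.succ_ne_zero j).symm]

@[simp] lemma ee_succ (j i : Fin r) : ee r j i.succ = if i = j then 1 else 0 := by
  simp [ee, Fin.succ_inj]

lemma pair_lvec_right (x : Fin (r + 1) → ℤ) : pair x (lvec r) = x 0 := by
  unfold pair; simp

lemma pair_lvec_left (x : Fin (r + 1) → ℤ) : pair (lvec r) x = x 0 := by
  rw [pair_comm, pair_lvec_right]

lemma pair_ee_right (x : Fin (r + 1) → ℤ) (j : Fin r) : pair x (ee r j) = -x j.succ := by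
  unfold pair; simp

lemma pair_ee_left (x : Fin (r + 1) → ℤ) (j : Fin r) : pair (ee r j) x = -x j.succ := by
  rw [pair_comm, pair_ee_right]

lemma pair_Kc_left (x : Fin (r + 1) → ℤ) :
    pair (Kc r) x = -3 * x 0 - ∑ i : Fin r, x i.succ := by
  unfold pair; simp [Kc, Fin.succ_ne_zero]

lemma ee_exceptional (j : Fin r) : Exceptional (ee r j) := by
  constructor
  · rw [pair_ee_right]; simp
  · rw [pair_ee_right]; simp [Kc, Fin.succ_ne_zero]

lemma pair_self (x : Fin (r + 1) → ℤ) :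
    pair x x = x 0 * x 0 - ∑ i : Fin r, x i.succ * x i.succ := rfl


section Refl

/-- reflection in a root `α` (with `α² = -2`). -/
def rf (α x : Fin (r + 1) → ℤ) : Fin (r + 1) → ℤ := x + (pair x α) • α

variable {α : Fin (r + 1) → ℤ} (hα : pair α α = -2) (hK : pair (Kc r) α = 0)

lemma pair_rf_left (x y : Fin (r + 1) → ℤ) :
    pair (rf α x) y = pair x y + pair x α * pair α y := by
  unfold rf; rw [pair_add_left, pair_smul_left]

lemma pair_rf_right (x y : Fin (r + 1) → ℤ) :
    pair x (rf α y) = pair x y + pair y α * pair x α := by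
  unfold rf; rw [pair_add_right, pair_smul_right]

include hα

lemma pair_rf_rf (x y : Fin (r + 1) → ℤ) : pair (rf α x) (rf α y) = pair x y := by
  rw [pair_rf_left, pair_rf_right, pair_rf_right, pair_comm α y, hα]; ring

lemma rf_rf (x : Fin (r + 1) → ℤ) : rf α (rf α x) = x := by
  unfold rf
  rw [pair_add_left, pair_smul_left, hα]
  ext m; simp; ring

lemma rf_add (x y : Fin (r + 1) → ℤ) : rf α (x + y) = rf α x + rf α y := by
  unfold rf
  rw [pair_add_left]
  ext m; simp; ring

lemma rf_injective : Function.Injective (rf α (r := r)) :=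
  Function.LeftInverse.injective (rf_rf hα)

include hK

lemma pair_Kc_rf (x : Fin (r + 1) → ℤ) : pair (Kc r) (rf α x) = pair (Kc r) x := by
  rw [pair_rf_right, hK]; ring

lemma exceptional_rf {E : Fin (r + 1) → ℤ} (hE : Exceptional E) : Exceptional (rf α E) := by
  exact ⟨by rw [pair_rf_rf hα, hE.1], by rw [pair_Kc_rf hα hK, hE.2]⟩

lemma nef_rf {D : Fin (r + 1) → ℤ} (hD : Nef D) : Nef (rf α D) := by
  intro E hE
  have h1 : pair (rf α D) E = pair (rf α D) (rf α (rf α E)) := by rw [rf_rf hα]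
  rw [h1, pair_rf_rf hα]
  exact hD _ (exceptional_rf hα hK hE)

lemma conic_rf {Q : Fin (r + 1) → ℤ} (hQ : Conic Q) : Conic (rf α Q) :=
  ⟨nef_rf hα hK hQ.1, by rw [pair_rf_rf hα, hQ.2.1], by rw [pair_Kc_rf hα hK, hQ.2.2]⟩

/-- The set of unordered pairs of exceptional classes summing to `Q`. -/
def PSet (Q : Fin (r + 1) → ℤ) : Set (Sym2 (Fin (r + 1) → ℤ)) :=
  {p | ∃ E E' : Fin (r + 1) → ℤ, Exceptional E ∧ Exceptional E' ∧
          E + E' = Q ∧ p = Sym2.mk E E'}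

lemma PSet_rf (Q : Fin (r + 1) → ℤ) : PSet (rf α Q) = Sym2.map (rf α) '' PSet Q := by
  ext p
  constructor
  · rintro ⟨E, E', hE, hE', hsum, rfl⟩
    refine ⟨Sym2.mk (rf α E) (rf α E'), ⟨rf α E, rf α E',
      exceptional_rf hα hK hE, exceptional_rf hα hK hE', ?_, rfl⟩, ?_⟩
    · rw [← rf_add hα, hsum, rf_rf hα]
    · show Sym2.map (rf α) s(rf α E, rf α E') = s(E, E')
      rw [Sym2.map_pair_eq, rf_rf hα, rf_rf hα]
  · rintro ⟨q, ⟨E, E', hE, hE', hsum, rfl⟩, rfl⟩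
    refine ⟨rf α E, rf α E', exceptional_rf hα hK hE, exceptional_rf hα hK hE', ?_, ?_⟩
    · rw [← rf_add hα, hsum]
    · show Sym2.map (rf α) s(E, E') = s(rf α E, rf α E')
      rw [Sym2.map_pair_eq]

lemma PSet_rf_finite {Q : Fin (r + 1) → ℤ} (h : (PSet Q).Finite) : (PSet (rf α Q)).Finite := by
  rw [PSet_rf hα hK]; exact h.image _

lemma PSet_rf_ncard (Q : Fin (r + 1) → ℤ) : (PSet (rf α Q)).ncard = (PSet Q).ncard := by
  rw [PSet_rf hα hK]
  exact Set.ncard_image_of_injective _ (Sym2.map.injective (rf_injective hα))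

end Refl

/-! ### Base case: `Q = ℓ - e_{i0}` -/

lemma sum_sq_one {ι : Type*} [DecidableEq ι] {s : Finset ι} {f : ι → ℤ}
    (h : ∑ i ∈ s, f i * f i = 1) :
    ∃ j ∈ s, (f j = 1 ∨ f j = -1) ∧ ∀ k ∈ s, k ≠ j → f k = 0 := by
  obtain ⟨j, hj, hfj⟩ := Finset.exists_ne_zero_of_sum_ne_zero
    (s := s) (f := fun i => f i * f i) (by rw [h]; norm_num)
  have hfj' : f j ≠ 0 := fun h0 => hfj (by simp [h0])
  have hj1 : 1 ≤ f j * f j := by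
    have := mul_self_pos.mpr hfj'; omega
  have hsplit := Finset.add_sum_erase s (fun i => f i * f i) hj
  have hnn : ∀ k ∈ s.erase j, 0 ≤ f k * f k := fun k _ => mul_self_nonneg _
  have h0 : 0 ≤ ∑ k ∈ s.erase j, f k * f k := Finset.sum_nonneg hnn
  have hone : f j * f j = 1 := by omega
  have hz : ∑ k ∈ s.erase j, f k * f k = 0 := by omega
  refine ⟨j, hj, mul_self_eq_one_iff.mp hone, fun k hk hkj => ?_⟩
  have := (Finset.sum_eq_zero_iff_of_nonneg hnn).mp hz k (Finset.mem_erase.mpr ⟨hkj, hk⟩)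
  exact mul_self_eq_zero.mp this

/-- The base conic `ℓ - e_{i0}`. -/
def Qb (r : ℕ) (i0 : Fin r) : Fin (r + 1) → ℤ := lvec r - ee r i0

@[simp] lemma Qb_zero (i0 : Fin r) : Qb r i0 0 = 1 := by simp [Qb]

@[simp] lemma Qb_succ (i0 j : Fin r) : Qb r i0 j.succ = if j = i0 then -1 else 0 := by
  simp only [Qb, Pi.sub_apply, lvec_succ, ee_succ]; split <;> norm_num

@[simp] lemma Kc_zero : Kc r 0 = -3 := rfl
@[simp] lemma Kc_succ (j : Fin r) : Kc r j.succ = 1 := by simp [Kc, Fin.succ_ne_zero]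

lemma exc_ee_sub (i0 j : Fin r) (hne : j ≠ i0) : Exceptional (Qb r i0 - ee r j) := by
  constructor <;>
  · simp [Qb, pair_sub_left, pair_sub_right, pair_lvec_right, pair_ee_right,
      pair_lvec_left, pair_ee_left, hne, Ne.symm hne, Kc_zero, Kc_succ]

lemma pair_Qb_self (i0 : Fin r) : pair (Qb r i0) (Qb r i0) = 0 := by
  simp [Qb, pair_sub_left, pair_sub_right, pair_lvec_right, pair_ee_right,
    pair_lvec_left, pair_ee_left]

lemma pair_Qb_left (i0 : Fin r) (x : Fin (r + 1) → ℤ) :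
    pair (Qb r i0) x = x 0 + x i0.succ := by
  rw [pair_comm]
  simp [Qb, pair_sub_right, pair_lvec_right, pair_ee_right]

/-- the `j`-th singular-fiber pair of the conic fibration of `Qb r i0`. -/
def gfib (r : ℕ) (i0 : Fin r) (j : Fin r) : Sym2 (Fin (r + 1) → ℤ) :=
  Sym2.mk (ee r j) (Qb r i0 - ee r j)

lemma PSet_Qb (i0 : Fin r) :
    PSet (Qb r i0) = gfib r i0 '' ↑(Finset.univ.erase i0) := by
  ext p
  constructor
  · rintro ⟨E, E', hE, hE', hsum, rfl⟩
    have hE'eq : E' = Qb r i0 - E := by rw [← hsum]; ext m; simp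
    have hpQ : pair (E + E') (E + E') = 0 := by rw [hsum]; exact pair_Qb_self i0
    rw [pair_add_left, pair_add_right, pair_add_right, pair_comm E' E,
      hE.1, hE'.1] at hpQ
    have hpEE' : pair E E' = 1 := by linarith
    have hQE : pair (Qb r i0) E = 0 := by
      rw [← hsum, pair_comm, pair_add_right, hE.1, hpEE']; ring
    rw [pair_Qb_left] at hQE
    have hti : E i0.succ = -E 0 := by linarith
    have hsq : ∑ m : Fin r, E m.succ * E m.succ = E 0 * E 0 + 1 := by
      have h := hE.1; rw [pair_self] at h; linarith
    have hsum1 : ∑ m : Fin r, E m.succ = 1 - 3 * E 0 := by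
      have h := hE.2; rw [pair_Kc_left] at h; linarith
    have hsplit := Finset.add_sum_erase Finset.univ
      (fun m => E m.succ * E m.succ) (Finset.mem_univ i0)
    have hii : E i0.succ * E i0.succ = E 0 * E 0 := by rw [hti]; ring
    have hsq' : ∑ m ∈ Finset.univ.erase i0, E m.succ * E m.succ = 1 := by
      rw [hsq] at hsplit; linarith
    obtain ⟨j1, hj1, hpm, hz⟩ := sum_sq_one hsq'
    have hj1i0 : j1 ≠ i0 := (Finset.mem_erase.mp hj1).1
    have hsplit2 := Finset.add_sum_erase Finset.univ (fun m => E m.succ) (Finset.mem_univ i0)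
    have hsingle : ∑ m ∈ Finset.univ.erase i0, E m.succ = E j1.succ :=
      Finset.sum_eq_single_of_mem j1 hj1 (fun k hk hkj => hz k hk hkj)
    have hval : E j1.succ = 1 - 2 * E 0 := by
      rw [hsingle, hsum1] at hsplit2; linarith
    rcases hpm with h1 | h1
    · have hE0 : E 0 = 0 := by omega
      have hEeq : E = ee r j1 := by
        funext m
        refine Fin.cases ?_ (fun i => ?_) m
        · rw [hE0, ee_zero]
        · rw [ee_succ]
          by_cases hij : i = j1
          · rw [if_pos hij, hij, h1]
          · rw [if_neg hij]
            by_cases hii0 : i = i0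
            · rw [hii0, hti, hE0]; ring
            · exact hz i (Finset.mem_erase.mpr ⟨hii0, Finset.mem_univ i⟩) hij
      refine ⟨j1, by simp [hj1i0], ?_⟩
      show Sym2.mk (ee r j1) (Qb r i0 - ee r j1) = s(E, E')
      rw [hE'eq, hEeq]
    · have hE0 : E 0 = 1 := by omega
      have hEeq : E = Qb r i0 - ee r j1 := by
        funext m
        refine Fin.cases ?_ (fun i => ?_) m
        · simp [hE0]
        · simp only [Pi.sub_apply, Qb_succ, ee_succ]
          by_cases hij : i = j1
          · rw [if_pos hij, if_neg (hij ▸ hj1i0), hij, h1]; ring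
          · rw [if_neg hij]
            by_cases hii0 : i = i0
            · rw [if_pos hii0, hii0, hti, hE0]; ring
            · rw [if_neg hii0]
              have := hz i (Finset.mem_erase.mpr ⟨hii0, Finset.mem_univ i⟩) hij
              rw [this]; ring
      have hE'2 : E' = ee r j1 := by
        rw [hE'eq, hEeq]; ext m; simp
      refine ⟨j1, by simp [hj1i0], ?_⟩
      show Sym2.mk (ee r j1) (Qb r i0 - ee r j1) = s(E, E')
      rw [hEeq, hE'2, Sym2.eq_swap]
  · rintro ⟨j, hj, rfl⟩
    have hji0 : j ≠ i0 := by
      simp only [Finset.coe_erase, Set.mem_diff, Finset.coe_univ] at hj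
      simpa using hj.2
    exact ⟨ee r j, Qb r i0 - ee r j, ee_exceptional j, exc_ee_sub i0 j hji0,
      by ext m; simp, rfl⟩

lemma gfib_injOn (i0 : Fin r) :
    Set.InjOn (gfib r i0) ↑(Finset.univ.erase i0) := by
  intro j hj j' hj' heq
  unfold gfib at heq
  rcases Sym2.eq_iff.mp heq with ⟨h1, _⟩ | ⟨h1, _⟩
  · have := congrFun h1 j.succ
    simp only [ee_succ, if_pos rfl] at this
    by_contra hne
    rw [if_neg hne] at this
    exact one_ne_zero this
  · have := congrFun h1 0
    simp at this

lemma base_count (i0 : Fin r) :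
    (PSet (Qb r i0)).Finite ∧ (PSet (Qb r i0)).ncard = r - 1 := by
  rw [PSet_Qb]
  refine ⟨(Finset.finite_toSet _).image _, ?_⟩
  rw [Set.ncard_image_of_injOn (gfib_injOn i0), Set.ncard_coe_finset,
    Finset.card_erase_of_mem (Finset.mem_univ i0), Finset.card_univ, Fintype.card_fin]

/-! ### Descent -/

lemma exists_triple (h3 : 3 ≤ r) (f : Fin r → ℤ) (hf : ∀ m, 0 ≤ f m) (b : ℤ) (hb : 2 ≤ b)
    (h1 : ∑ m : Fin r, f m = 3 * b - 2) (h2 : ∑ m : Fin r, f m * f m = b * b) :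
    ∃ i j k : Fin r, j ≠ i ∧ k ≠ i ∧ k ≠ j ∧ b < f i + f j + f k := by
  obtain ⟨i, _, hmi⟩ := Finset.univ.exists_max_image f ⟨⟨0, by omega⟩, Finset.mem_univ _⟩
  have hcard1 : (Finset.univ.erase i).card = r - 1 := by
    rw [Finset.card_erase_of_mem (Finset.mem_univ i), Finset.card_univ, Fintype.card_fin]
  obtain ⟨j, hj, hmj⟩ := (Finset.univ.erase i).exists_max_image f
    (Finset.card_pos.mp (by omega))
  have hcard2 : ((Finset.univ.erase i).erase j).card = r - 2 := by
    rw [Finset.card_erase_of_mem hj, hcard1]; omega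
  obtain ⟨k, hk, hmk⟩ := ((Finset.univ.erase i).erase j).exists_max_image f
    (Finset.card_pos.mp (by omega))
  have hji : j ≠ i := (Finset.mem_erase.mp hj).1
  have hkj : k ≠ j := (Finset.mem_erase.mp hk).1
  have hki : k ≠ i := (Finset.mem_erase.mp (Finset.mem_of_mem_erase hk)).1
  refine ⟨i, j, k, hji, hki, hkj, ?_⟩
  by_contra hle
  push_neg at hle
  have hvu : f j ≤ f i := hmi j (Finset.mem_univ j)
  have hwv : f k ≤ f j := hmj k (Finset.mem_of_mem_erase hk)
  -- split off the three maxima from the two sums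
  have hA := Finset.add_sum_erase Finset.univ (fun m => f m * f m) (Finset.mem_univ i)
  have hB := Finset.add_sum_erase (Finset.univ.erase i) (fun m => f m * f m) hj
  have hC := Finset.add_sum_erase ((Finset.univ.erase i).erase j) (fun m => f m * f m) hk
  have hA' := Finset.add_sum_erase Finset.univ (fun m => f m) (Finset.mem_univ i)
  have hB' := Finset.add_sum_erase (Finset.univ.erase i) (fun m => f m) hj
  have hC' := Finset.add_sum_erase ((Finset.univ.erase i).erase j) (fun m => f m) hk
  set s3 := (((Finset.univ.erase i).erase j).erase k) with hs3
  have hrest : ∀ m ∈ s3, f m ≤ f k := fun m hm => hmk m (Finset.mem_of_mem_erase hm)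
  rcases (hf k).eq_or_lt with hw | hw
  · -- third maximum is 0 : only two nonzero values
    have hz : ∀ m ∈ s3, f m = 0 := fun m hm => le_antisymm (hw ▸ hrest m hm) (hf m)
    have hzs : ∑ m ∈ s3, f m = 0 := Finset.sum_eq_zero hz
    rw [← hA', ← hB', ← hC', hzs] at h1
    linarith
  · have hrsq : ∑ m ∈ s3, f m * f m ≤ f k * ∑ m ∈ s3, f m := by
      rw [Finset.mul_sum]
      exact Finset.sum_le_sum fun m hm =>
        mul_le_mul_of_nonneg_right (hrest m hm) (hf m)
    have hrsum : ∑ m ∈ s3, f m = 3 * b - 2 - f i - f j - f k := by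
      rw [← hA', ← hB', ← hC'] at h1; linarith
    have hKEY : b * b ≤ f i * f i + f j * f j + f k * f k +
        f k * (3 * b - 2 - f i - f j - f k) := by
      rw [← hA, ← hB, ← hC] at h2
      rw [hrsum] at hrsq
      linarith
    nlinarith [mul_nonneg (sub_nonneg.2 hvu) (hf j), mul_nonneg (sub_nonneg.2 hwv) (hf k),
      mul_nonneg (sub_nonneg.2 (hwv.trans hvu)) (hf k),
      mul_nonneg (sub_nonneg.2 hle) (sub_nonneg.2 (by linarith : 3 * f k ≤ f i + f j + f k)),
      mul_nonneg (sub_nonneg.2 hwv) (by linarith : (0:ℤ) ≤ f i + f j + f k),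
      mul_nonneg (sub_nonneg.2 hle) (hf k)]

lemma conic_pos {Q : Fin (r + 1) → ℤ} (hQ : Conic Q) : 1 ≤ Q 0 := by
  have hn : ∀ m : Fin r, Q m.succ ≤ 0 := fun m => by
    have := hQ.1 (ee r m) (ee_exceptional m)
    rw [pair_ee_right] at this; linarith
  have hsum : ∑ m : Fin r, Q m.succ = 2 - 3 * Q 0 := by
    have := hQ.2.2; rw [pair_Kc_left] at this; linarith
  have h0 : ∑ m : Fin r, Q m.succ ≤ 0 := Finset.sum_nonpos fun m _ => hn m
  rw [hsum] at h0; linarith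

lemma conic_one {Q : Fin (r + 1) → ℤ} (hQ : Conic Q) (h0 : Q 0 = 1) :
    ∃ i0 : Fin r, Q = Qb r i0 := by
  have hsq : ∑ m : Fin r, Q m.succ * Q m.succ = 1 := by
    have := hQ.2.1; rw [pair_self, h0] at this; linarith
  have hsum : ∑ m : Fin r, Q m.succ = -1 := by
    have := hQ.2.2; rw [pair_Kc_left, h0] at this; linarith
  obtain ⟨i0, hi0, hpm, hz⟩ := sum_sq_one hsq
  have hsingle : ∑ m : Fin r, Q m.succ = Q i0.succ :=
    Finset.sum_eq_single_of_mem i0 hi0 fun k hk hki => hz k hk hki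
  have hval : Q i0.succ = -1 := by rw [← hsingle, hsum]
  refine ⟨i0, funext fun m => ?_⟩
  refine Fin.cases ?_ (fun i => ?_) m
  · rw [h0, Qb_zero]
  · rw [Qb_succ]
    by_cases hii : i = i0
    · rw [if_pos hii, hii, hval]
    · rw [if_neg hii]
      exact hz i (Finset.mem_univ i) hii

lemma main_count (h3 : 3 ≤ r) : ∀ b : ℕ, ∀ Q : Fin (r + 1) → ℤ, Conic Q → Q 0 = (b : ℤ) →
    (PSet Q).Finite ∧ (PSet Q).ncard = r - 1 := by
  intro b
  induction b using Nat.strong_induction_on with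
  | _ b ih =>
    intro Q hQ hQ0
    have hn : ∀ m : Fin r, Q m.succ ≤ 0 := fun m => by
      have := hQ.1 (ee r m) (ee_exceptional m)
      rw [pair_ee_right] at this; linarith
    have hb1 : 1 ≤ Q 0 := conic_pos hQ
    rcases eq_or_lt_of_le hb1 with h1 | h2
    · obtain ⟨i0, rfl⟩ := conic_one hQ h1.symm
      exact base_count i0
    · -- descent step
      have hsum : ∑ m : Fin r, Q m.succ = 2 - 3 * Q 0 := by
        have := hQ.2.2; rw [pair_Kc_left] at this; linarith
      have hQsq : ∑ m : Fin r, Q m.succ * Q m.succ = Q 0 * Q 0 := by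
        have := hQ.2.1; rw [pair_self] at this; linarith
      obtain ⟨i, j, k, hji, hki, hkj, hbig⟩ := exists_triple h3 (fun m => -Q m.succ)
        (fun m => by simpa using hn m) (Q 0) (by linarith)
        (by rw [Finset.sum_neg_distrib, hsum]; ring)
        (by simpa using hQsq)
      set α : Fin (r + 1) → ℤ := lvec r - ee r i - ee r j - ee r k with hαdef
      have hα : pair α α = -2 := by
        simp [hαdef, pair_sub_left, pair_sub_right, pair_lvec_right, pair_ee_right,
          pair_lvec_left, pair_ee_left, hji, hki, hkj, Ne.symm hji, Ne.symm hki, Ne.symm hkj]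
      have hKα : pair (Kc r) α = 0 := by
        simp [hαdef, pair_sub_right, pair_lvec_right, pair_ee_right, Kc_zero, Kc_succ]
      have hQα : pair Q α = Q 0 + Q i.succ + Q j.succ + Q k.succ := by
        simp [hαdef, pair_sub_right, pair_lvec_right, pair_ee_right]
      have hneg : pair Q α < 0 := by rw [hQα]; linarith
      have hQ' : Conic (rf α Q) := conic_rf hα hKα hQ
      have hQ'0 : (rf α Q) 0 = Q 0 + pair Q α := by
        show Q 0 + pair Q α • α 0 = Q 0 + pair Q α
        have : α 0 = 1 := by simp [hαdef]
        rw [this]; simp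
      have hb1' : 1 ≤ (rf α Q) 0 := conic_pos hQ'
      have hlt : ((rf α Q) 0).toNat < b := by omega
      obtain ⟨hf, hc⟩ := ih _ hlt (rf α Q) hQ' (Int.toNat_of_nonneg (by linarith)).symm
      constructor
      · have h := PSet_rf_finite hα hKα hf
        rwa [rf_rf hα] at h
      · have h := PSet_rf_ncard hα hKα (rf α Q)
        rw [rf_rf hα] at h
        rw [h, hc]

end ConicAux

/-- For `3 ≤ r ≤ 8` and any conic `Q` in `Λ_r`, the number of unordered pairs
`{E, E′}` of exceptional classes with `E + E′ = Q` is exactly `r − 1`. -/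
theorem conic_pairs_count (r : ℕ) (h3 : 3 ≤ r) (h8 : r ≤ 8)
    (Q : Fin (r + 1) → ℤ) (hQ : Conic Q) :
    {p : Sym2 (Fin (r + 1) → ℤ) |
        ∃ E E' : Fin (r + 1) → ℤ, Exceptional E ∧ Exceptional E' ∧
          E + E' = Q ∧ p = Sym2.mk E E'}.Finite ∧
    {p : Sym2 (Fin (r + 1) → ℤ) |
        ∃ E E' : Fin (r + 1) → ℤ, Exceptional E ∧ Exceptional E' ∧
          E + E' = Q ∧ p = Sym2.mk E E'}.ncard = r - 1 := by

  have hb1 := ConicAux.conic_pos hQ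
  exact ConicAux.main_count h3 (Q 0).toNat Q hQ (Int.toNat_of_nonneg (by linarith)).symm
end

section
/- Every nef class D ∈ Λ₅ with ⟨−K₅, D⟩ = 3 satisfies ⟨D, D⟩ = 1; that is, every nef class of anticanonical degree 3 in the Picard lattice of the degree-4 del Pezzo surface is a twisted cubic. -/
lemma pair_expand (x y : Fin (5 + 1) → ℤ) : pair x y =
    x 0 * y 0 - (x 1 * y 1 + x 2 * y 2 + x 3 * y 3 + x 4 * y 4 + x 5 * y 5) := by
  simp [pair, Fin.sum_univ_five]

/-- Every nef class of anticanonical degree `3` in `Λ₅` is a twisted cubic,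
i.e. has self-intersection `1`. -/
theorem nef_deg_three_is_twistedCubic (D : Fin (5 + 1) → ℤ) (hD : Nef D)
    (hdeg : pair (-Kc 5) D = 3) :
    pair D D = 1 := by
  -- degree equation
  have hK : (-Kc 5 : Fin (5+1) → ℤ) = ![3,-1,-1,-1,-1,-1] := by
    funext i; fin_cases i <;> rfl
  rw [hK, pair_expand] at hdeg
  have hdeg' : (3:ℤ) * D 0 - ((-1) * D 1 + (-1) * D 2 + (-1) * D 3
      + (-1) * D 4 + (-1) * D 5) = 3 := hdeg
  -- pairing with the exceptional classes e_i : D i ≤ 0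
  have he : ∀ i : Fin 5, D i.succ ≤ 0 := by
    intro i
    have hE : Exceptional (fun j : Fin 6 => if j = i.succ then (1:ℤ) else 0) := by
      constructor
      · have h0 : (0 : Fin 6) ≠ i.succ := by
          intro h; exact (Fin.succ_ne_zero i) h.symm
        simp [pair, h0, Finset.sum_ite_eq']
      · have h0 : (0 : Fin 6) ≠ i.succ := by
          intro h; exact (Fin.succ_ne_zero i) h.symm
        simp [pair, Kc, h0, Fin.succ_ne_zero, Finset.sum_ite_eq']
    have h := hD _ hE
    have h0 : (0 : Fin 6) ≠ i.succ := by
      intro h; exact (Fin.succ_ne_zero i) h.symm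
    simp [pair, h0, Finset.sum_ite_eq'] at h
    omega
  have h1 : D 1 ≤ 0 := he 0
  have h2 : D 2 ≤ 0 := he 1
  have h3 : D 3 ≤ 0 := he 2
  have h4 : D 4 ≤ 0 := he 3
  have h5 : D 5 ≤ 0 := he 4
  -- pairing with the lines e_0 - e_i - e_j
  have hl12 := hD ![1,-1,-1,0,0,0] (by constructor <;> decide)
  have hl13 := hD ![1,-1,0,-1,0,0] (by constructor <;> decide)
  have hl14 := hD ![1,-1,0,0,-1,0] (by constructor <;> decide)
  have hl15 := hD ![1,-1,0,0,0,-1] (by constructor <;> decide)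
  have hl23 := hD ![1,0,-1,-1,0,0] (by constructor <;> decide)
  have hl24 := hD ![1,0,-1,0,-1,0] (by constructor <;> decide)
  have hl25 := hD ![1,0,-1,0,0,-1] (by constructor <;> decide)
  have hl34 := hD ![1,0,0,-1,-1,0] (by constructor <;> decide)
  have hl35 := hD ![1,0,0,-1,0,-1] (by constructor <;> decide)
  have hl45 := hD ![1,0,0,0,-1,-1] (by constructor <;> decide)
  rw [pair_expand] at hl12 hl13 hl14 hl15 hl23 hl24 hl25 hl34 hl35 hl45
  have g12 : (0:ℤ) ≤ D 0 * 1 - (D 1 * (-1) + D 2 * (-1) + D 3 * 0 + D 4 * 0 + D 5 * 0) := hl12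
  have g13 : (0:ℤ) ≤ D 0 * 1 - (D 1 * (-1) + D 2 * 0 + D 3 * (-1) + D 4 * 0 + D 5 * 0) := hl13
  have g14 : (0:ℤ) ≤ D 0 * 1 - (D 1 * (-1) + D 2 * 0 + D 3 * 0 + D 4 * (-1) + D 5 * 0) := hl14
  have g15 : (0:ℤ) ≤ D 0 * 1 - (D 1 * (-1) + D 2 * 0 + D 3 * 0 + D 4 * 0 + D 5 * (-1)) := hl15
  have g23 : (0:ℤ) ≤ D 0 * 1 - (D 1 * 0 + D 2 * (-1) + D 3 * (-1) + D 4 * 0 + D 5 * 0) := hl23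
  have g24 : (0:ℤ) ≤ D 0 * 1 - (D 1 * 0 + D 2 * (-1) + D 3 * 0 + D 4 * (-1) + D 5 * 0) := hl24
  have g25 : (0:ℤ) ≤ D 0 * 1 - (D 1 * 0 + D 2 * (-1) + D 3 * 0 + D 4 * 0 + D 5 * (-1)) := hl25
  have g34 : (0:ℤ) ≤ D 0 * 1 - (D 1 * 0 + D 2 * 0 + D 3 * (-1) + D 4 * (-1) + D 5 * 0) := hl34
  have g35 : (0:ℤ) ≤ D 0 * 1 - (D 1 * 0 + D 2 * 0 + D 3 * (-1) + D 4 * 0 + D 5 * (-1)) := hl35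
  have g45 : (0:ℤ) ≤ D 0 * 1 - (D 1 * 0 + D 2 * 0 + D 3 * 0 + D 4 * (-1) + D 5 * (-1)) := hl45
  -- pairing with the conic-type exceptional class (2,-1,-1,-1,-1,-1)
  have hq := hD ![2,-1,-1,-1,-1,-1] (by constructor <;> decide)
  rw [pair_expand] at hq
  have gq : (0:ℤ) ≤ D 0 * 2 - (D 1 * (-1) + D 2 * (-1) + D 3 * (-1) + D 4 * (-1) + D 5 * (-1)) := hq
  clear hl12 hl13 hl14 hl15 hl23 hl24 hl25 hl34 hl35 hl45 hq hdeg
  rw [pair_expand]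
  have ha : D 0 = 1 ∨ D 0 = 2 ∨ D 0 = 3 := by omega
  rcases ha with ha | ha | ha
  · have e1 : D 1 = 0 := by omega
    have e2 : D 2 = 0 := by omega
    have e3 : D 3 = 0 := by omega
    have e4 : D 4 = 0 := by omega
    have e5 : D 5 = 0 := by omega
    rw [ha, e1, e2, e3, e4, e5]; ring
  · have q1 : D 1 * D 1 = -D 1 := by
      have : D 1 = 0 ∨ D 1 = -1 := by omega
      rcases this with h | h <;> rw [h] <;> ring
    have q2 : D 2 * D 2 = -D 2 := by
      have : D 2 = 0 ∨ D 2 = -1 := by omega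
      rcases this with h | h <;> rw [h] <;> ring
    have q3 : D 3 * D 3 = -D 3 := by
      have : D 3 = 0 ∨ D 3 = -1 := by omega
      rcases this with h | h <;> rw [h] <;> ring
    have q4 : D 4 * D 4 = -D 4 := by
      have : D 4 = 0 ∨ D 4 = -1 := by omega
      rcases this with h | h <;> rw [h] <;> ring
    have q5 : D 5 * D 5 = -D 5 := by
      have : D 5 = 0 ∨ D 5 = -1 := by omega
      rcases this with h | h <;> rw [h] <;> ring
    rw [ha, q1, q2, q3, q4, q5]; omega
  · have q1 : D 1 * D 1 = -3 * D 1 - 2 := by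
      have : D 1 = -1 ∨ D 1 = -2 := by omega
      rcases this with h | h <;> rw [h] <;> ring
    have q2 : D 2 * D 2 = -3 * D 2 - 2 := by
      have : D 2 = -1 ∨ D 2 = -2 := by omega
      rcases this with h | h <;> rw [h] <;> ring
    have q3 : D 3 * D 3 = -3 * D 3 - 2 := by
      have : D 3 = -1 ∨ D 3 = -2 := by omega
      rcases this with h | h <;> rw [h] <;> ring
    have q4 : D 4 * D 4 = -3 * D 4 - 2 := by
      have : D 4 = -1 ∨ D 4 = -2 := by omega
      rcases this with h | h <;> rw [h] <;> ring
    have q5 : D 5 * D 5 = -3 * D 5 - 2 := by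
      have : D 5 = -1 ∨ D 5 = -2 := by omega
      rcases this with h | h <;> rw [h] <;> ring
    rw [ha, q1, q2, q3, q4, q5]; omega
end

section
/- Every nef class D ∈ Λ₆ with ⟨−K₆, D⟩ = 3 is either equal to −K₆ or satisfies ⟨D, D⟩ = 1 (i.e., is a twisted cubic); consequently the number of nef classes of anticanonical degree 3 in Λ₆ is 72 + 1 = 73. -/
set_option maxHeartbeats 2000000

/-- The 27 exceptional classes of `Λ₆`. -/
def excL : List (Fin 7 → ℤ) := [![0,1,0,0,0,0,0],
 ![0,0,1,0,0,0,0],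
 ![0,0,0,1,0,0,0],
 ![0,0,0,0,1,0,0],
 ![0,0,0,0,0,1,0],
 ![0,0,0,0,0,0,1],
 ![1,-1,-1,0,0,0,0],
 ![1,-1,0,-1,0,0,0],
 ![1,-1,0,0,-1,0,0],
 ![1,-1,0,0,0,-1,0],
 ![1,-1,0,0,0,0,-1],
 ![1,0,-1,-1,0,0,0],
 ![1,0,-1,0,-1,0,0],
 ![1,0,-1,0,0,-1,0],
 ![1,0,-1,0,0,0,-1],
 ![1,0,0,-1,-1,0,0],
 ![1,0,0,-1,0,-1,0],
 ![1,0,0,-1,0,0,-1],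
 ![1,0,0,0,-1,-1,0],
 ![1,0,0,0,-1,0,-1],
 ![1,0,0,0,0,-1,-1],
 ![2,0,-1,-1,-1,-1,-1],
 ![2,-1,0,-1,-1,-1,-1],
 ![2,-1,-1,0,-1,-1,-1],
 ![2,-1,-1,-1,0,-1,-1],
 ![2,-1,-1,-1,-1,0,-1],
 ![2,-1,-1,-1,-1,-1,0]]

/-- The 73 nef classes of degree 3 of `Λ₆`. -/
def nefL : List (Fin 7 → ℤ) := [![1,0,0,0,0,0,0],
 ![2,-1,-1,-1,0,0,0],
 ![2,-1,-1,0,-1,0,0],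
 ![2,-1,-1,0,0,-1,0],
 ![2,-1,-1,0,0,0,-1],
 ![2,-1,0,-1,-1,0,0],
 ![2,-1,0,-1,0,-1,0],
 ![2,-1,0,-1,0,0,-1],
 ![2,-1,0,0,-1,-1,0],
 ![2,-1,0,0,-1,0,-1],
 ![2,-1,0,0,0,-1,-1],
 ![2,0,-1,-1,-1,0,0],
 ![2,0,-1,-1,0,-1,0],
 ![2,0,-1,-1,0,0,-1],
 ![2,0,-1,0,-1,-1,0],
 ![2,0,-1,0,-1,0,-1],
 ![2,0,-1,0,0,-1,-1],
 ![2,0,0,-1,-1,-1,0],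
 ![2,0,0,-1,-1,0,-1],
 ![2,0,0,-1,0,-1,-1],
 ![2,0,0,0,-1,-1,-1],
 ![3,-1,-1,-1,-1,-1,-1],
 ![3,-2,0,-1,-1,-1,-1],
 ![3,-2,-1,0,-1,-1,-1],
 ![3,-2,-1,-1,0,-1,-1],
 ![3,-2,-1,-1,-1,0,-1],
 ![3,-2,-1,-1,-1,-1,0],
 ![3,0,-2,-1,-1,-1,-1],
 ![3,-1,-2,0,-1,-1,-1],
 ![3,-1,-2,-1,0,-1,-1],
 ![3,-1,-2,-1,-1,0,-1],
 ![3,-1,-2,-1,-1,-1,0],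
 ![3,0,-1,-2,-1,-1,-1],
 ![3,-1,0,-2,-1,-1,-1],
 ![3,-1,-1,-2,0,-1,-1],
 ![3,-1,-1,-2,-1,0,-1],
 ![3,-1,-1,-2,-1,-1,0],
 ![3,0,-1,-1,-2,-1,-1],
 ![3,-1,0,-1,-2,-1,-1],
 ![3,-1,-1,0,-2,-1,-1],
 ![3,-1,-1,-1,-2,0,-1],
 ![3,-1,-1,-1,-2,-1,0],
 ![3,0,-1,-1,-1,-2,-1],
 ![3,-1,0,-1,-1,-2,-1],
 ![3,-1,-1,0,-1,-2,-1],
 ![3,-1,-1,-1,0,-2,-1],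
 ![3,-1,-1,-1,-1,-2,0],
 ![3,0,-1,-1,-1,-1,-2],
 ![3,-1,0,-1,-1,-1,-2],
 ![3,-1,-1,0,-1,-1,-2],
 ![3,-1,-1,-1,0,-1,-2],
 ![3,-1,-1,-1,-1,0,-2],
 ![4,-2,-2,-2,-1,-1,-1],
 ![4,-2,-2,-1,-2,-1,-1],
 ![4,-2,-2,-1,-1,-2,-1],
 ![4,-2,-2,-1,-1,-1,-2],
 ![4,-2,-1,-2,-2,-1,-1],
 ![4,-2,-1,-2,-1,-2,-1],
 ![4,-2,-1,-2,-1,-1,-2],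
 ![4,-2,-1,-1,-2,-2,-1],
 ![4,-2,-1,-1,-2,-1,-2],
 ![4,-2,-1,-1,-1,-2,-2],
 ![4,-1,-2,-2,-2,-1,-1],
 ![4,-1,-2,-2,-1,-2,-1],
 ![4,-1,-2,-2,-1,-1,-2],
 ![4,-1,-2,-1,-2,-2,-1],
 ![4,-1,-2,-1,-2,-1,-2],
 ![4,-1,-2,-1,-1,-2,-2],
 ![4,-1,-1,-2,-2,-2,-1],
 ![4,-1,-1,-2,-2,-1,-2],
 ![4,-1,-1,-2,-1,-2,-2],
 ![4,-1,-1,-1,-2,-2,-2],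
 ![5,-2,-2,-2,-2,-2,-2]]

lemma pair_eval (x y : Fin 7 → ℤ) :
    pair x y = x 0 * y 0 - (x 1 * y 1 + x 2 * y 2 + x 3 * y 3 + x 4 * y 4 + x 5 * y 5 + x 6 * y 6) := by
  simp [pair, Fin.sum_univ_six]

lemma pair_vv (a0 a1 a2 a3 a4 a5 a6 b0 b1 b2 b3 b4 b5 b6 : ℤ) :
    pair ![a0,a1,a2,a3,a4,a5,a6] ![b0,b1,b2,b3,b4,b5,b6]
      = a0*b0 - (a1*b1+a2*b2+a3*b3+a4*b4+a5*b5+a6*b6) := by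
  rw [pair_eval]; rfl

lemma Kc_eq : Kc 6 = ![-3,1,1,1,1,1,1] := by funext i; fin_cases i <;> rfl

lemma pair_Kv (b0 b1 b2 b3 b4 b5 b6 : ℤ) :
    pair (Kc 6) ![b0,b1,b2,b3,b4,b5,b6] = -3*b0 - (b1+b2+b3+b4+b5+b6) := by
  rw [Kc_eq, pair_vv]; ring

lemma nKc_eq : -Kc 6 = ![3,-1,-1,-1,-1,-1,-1] := by funext i; fin_cases i <;> rfl

lemma pair_nKv (b0 b1 b2 b3 b4 b5 b6 : ℤ) :
    pair (-Kc 6) ![b0,b1,b2,b3,b4,b5,b6] = 3*b0 + (b1+b2+b3+b4+b5+b6) := by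
  rw [nKc_eq, pair_vv]; ring

lemma etaD (D : Fin 7 → ℤ) : D = ![D 0, D 1, D 2, D 3, D 4, D 5, D 6] := by
  funext i; fin_cases i <;> rfl

lemma mss (e : ℤ) : 0 ≤ e*(e+1) := by
  rcases le_or_gt 0 e with h|h
  · exact mul_nonneg h (by omega)
  · have h2 : 0 ≤ (-e) * (-(e+1)) := mul_nonneg (by omega) (by omega)
    nlinarith [h2]

lemma exc_mem (E : Fin 7 → ℤ) (hE : Exceptional E) : E ∈ excL := by
  obtain ⟨b0,b1,b2,b3,b4,b5,b6,rfl⟩ : ∃ c0 c1 c2 c3 c4 c5 c6,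
      E = ![c0,c1,c2,c3,c4,c5,c6] := ⟨_,_,_,_,_,_,_, etaD E⟩
  obtain ⟨h1,h2⟩ := hE
  rw [pair_vv] at h1
  rw [pair_Kv] at h2
  have hq : b1^2+b2^2+b3^2+b4^2+b5^2+b6^2 = b0^2+1 := by linear_combination -h1
  have hs : b1+b2+b3+b4+b5+b6 = -3*b0+1 := by linarith
  have key : (b1+b2+b3+b4+b5+b6)^2 ≤ 6*(b1^2+b2^2+b3^2+b4^2+b5^2+b6^2) := by
    nlinarith [sq_nonneg (b1-b2), sq_nonneg (b1-b3), sq_nonneg (b1-b4), sq_nonneg (b1-b5), sq_nonneg (b1-b6), sq_nonneg (b2-b3), sq_nonneg (b2-b4), sq_nonneg (b2-b5), sq_nonneg (b2-b6), sq_nonneg (b3-b4), sq_nonneg (b3-b5), sq_nonneg (b3-b6), sq_nonneg (b4-b5), sq_nonneg (b4-b6), sq_nonneg (b5-b6)]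
  have hb0a : 0 ≤ b0 := by nlinarith [key, sq_nonneg b0]
  have hb0b : b0 ≤ 2 := by nlinarith [key, sq_nonneg (b0-3)]
  have T : ∀ e : ℤ, 0 ≤ e*(e+1) := mss
  have S : ∀ e : ℤ, 0 ≤ -e*(-e+1) := fun e => mss (-e)
  interval_cases b0
  ·
    have z1 : -b1 = 0 ∨ -b1 + 1 = 0 :=
      mul_eq_zero.mp (le_antisymm (by linarith [S b2, S b3, S b4, S b5, S b6]) (S b1))
    have c1a : 0 ≤ b1 := by rcases z1 with h|h <;> omega
    have c1b : b1 ≤ 1 := by rcases z1 with h|h <;> omega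
    have z2 : -b2 = 0 ∨ -b2 + 1 = 0 :=
      mul_eq_zero.mp (le_antisymm (by linarith [S b1, S b3, S b4, S b5, S b6]) (S b2))
    have c2a : 0 ≤ b2 := by rcases z2 with h|h <;> omega
    have c2b : b2 ≤ 1 := by rcases z2 with h|h <;> omega
    have z3 : -b3 = 0 ∨ -b3 + 1 = 0 :=
      mul_eq_zero.mp (le_antisymm (by linarith [S b1, S b2, S b4, S b5, S b6]) (S b3))
    have c3a : 0 ≤ b3 := by rcases z3 with h|h <;> omega
    have c3b : b3 ≤ 1 := by rcases z3 with h|h <;> omega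
    have z4 : -b4 = 0 ∨ -b4 + 1 = 0 :=
      mul_eq_zero.mp (le_antisymm (by linarith [S b1, S b2, S b3, S b5, S b6]) (S b4))
    have c4a : 0 ≤ b4 := by rcases z4 with h|h <;> omega
    have c4b : b4 ≤ 1 := by rcases z4 with h|h <;> omega
    have z5 : -b5 = 0 ∨ -b5 + 1 = 0 :=
      mul_eq_zero.mp (le_antisymm (by linarith [S b1, S b2, S b3, S b4, S b6]) (S b5))
    have c5a : 0 ≤ b5 := by rcases z5 with h|h <;> omega
    have c5b : b5 ≤ 1 := by rcases z5 with h|h <;> omega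
    have z6 : -b6 = 0 ∨ -b6 + 1 = 0 :=
      mul_eq_zero.mp (le_antisymm (by linarith [S b1, S b2, S b3, S b4, S b5]) (S b6))
    have c6a : 0 ≤ b6 := by rcases z6 with h|h <;> omega
    have c6b : b6 ≤ 1 := by rcases z6 with h|h <;> omega
    interval_cases b1 <;> interval_cases b2 <;> interval_cases b3 <;>
      interval_cases b4 <;> interval_cases b5 <;> interval_cases b6 <;>
      first | (exfalso; omega) | decide
  ·
    have z1 : b1 = 0 ∨ b1 + 1 = 0 :=
      mul_eq_zero.mp (le_antisymm (by linarith [T b2, T b3, T b4, T b5, T b6]) (T b1))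
    have c1a : -1 ≤ b1 := by rcases z1 with h|h <;> omega
    have c1b : b1 ≤ 0 := by rcases z1 with h|h <;> omega
    have z2 : b2 = 0 ∨ b2 + 1 = 0 :=
      mul_eq_zero.mp (le_antisymm (by linarith [T b1, T b3, T b4, T b5, T b6]) (T b2))
    have c2a : -1 ≤ b2 := by rcases z2 with h|h <;> omega
    have c2b : b2 ≤ 0 := by rcases z2 with h|h <;> omega
    have z3 : b3 = 0 ∨ b3 + 1 = 0 :=
      mul_eq_zero.mp (le_antisymm (by linarith [T b1, T b2, T b4, T b5, T b6]) (T b3))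
    have c3a : -1 ≤ b3 := by rcases z3 with h|h <;> omega
    have c3b : b3 ≤ 0 := by rcases z3 with h|h <;> omega
    have z4 : b4 = 0 ∨ b4 + 1 = 0 :=
      mul_eq_zero.mp (le_antisymm (by linarith [T b1, T b2, T b3, T b5, T b6]) (T b4))
    have c4a : -1 ≤ b4 := by rcases z4 with h|h <;> omega
    have c4b : b4 ≤ 0 := by rcases z4 with h|h <;> omega
    have z5 : b5 = 0 ∨ b5 + 1 = 0 :=
      mul_eq_zero.mp (le_antisymm (by linarith [T b1, T b2, T b3, T b4, T b6]) (T b5))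
    have c5a : -1 ≤ b5 := by rcases z5 with h|h <;> omega
    have c5b : b5 ≤ 0 := by rcases z5 with h|h <;> omega
    have z6 : b6 = 0 ∨ b6 + 1 = 0 :=
      mul_eq_zero.mp (le_antisymm (by linarith [T b1, T b2, T b3, T b4, T b5]) (T b6))
    have c6a : -1 ≤ b6 := by rcases z6 with h|h <;> omega
    have c6b : b6 ≤ 0 := by rcases z6 with h|h <;> omega
    interval_cases b1 <;> interval_cases b2 <;> interval_cases b3 <;>
      interval_cases b4 <;> interval_cases b5 <;> interval_cases b6 <;>
      first | (exfalso; omega) | decide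
  ·
    have z1 : b1 = 0 ∨ b1 + 1 = 0 :=
      mul_eq_zero.mp (le_antisymm (by linarith [T b2, T b3, T b4, T b5, T b6]) (T b1))
    have c1a : -1 ≤ b1 := by rcases z1 with h|h <;> omega
    have c1b : b1 ≤ 0 := by rcases z1 with h|h <;> omega
    have z2 : b2 = 0 ∨ b2 + 1 = 0 :=
      mul_eq_zero.mp (le_antisymm (by linarith [T b1, T b3, T b4, T b5, T b6]) (T b2))
    have c2a : -1 ≤ b2 := by rcases z2 with h|h <;> omega
    have c2b : b2 ≤ 0 := by rcases z2 with h|h <;> omega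
    have z3 : b3 = 0 ∨ b3 + 1 = 0 :=
      mul_eq_zero.mp (le_antisymm (by linarith [T b1, T b2, T b4, T b5, T b6]) (T b3))
    have c3a : -1 ≤ b3 := by rcases z3 with h|h <;> omega
    have c3b : b3 ≤ 0 := by rcases z3 with h|h <;> omega
    have z4 : b4 = 0 ∨ b4 + 1 = 0 :=
      mul_eq_zero.mp (le_antisymm (by linarith [T b1, T b2, T b3, T b5, T b6]) (T b4))
    have c4a : -1 ≤ b4 := by rcases z4 with h|h <;> omega
    have c4b : b4 ≤ 0 := by rcases z4 with h|h <;> omega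
    have z5 : b5 = 0 ∨ b5 + 1 = 0 :=
      mul_eq_zero.mp (le_antisymm (by linarith [T b1, T b2, T b3, T b4, T b6]) (T b5))
    have c5a : -1 ≤ b5 := by rcases z5 with h|h <;> omega
    have c5b : b5 ≤ 0 := by rcases z5 with h|h <;> omega
    have z6 : b6 = 0 ∨ b6 + 1 = 0 :=
      mul_eq_zero.mp (le_antisymm (by linarith [T b1, T b2, T b3, T b4, T b5]) (T b6))
    have c6a : -1 ≤ b6 := by rcases z6 with h|h <;> omega
    have c6b : b6 ≤ 0 := by rcases z6 with h|h <;> omega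
    interval_cases b1 <;> interval_cases b2 <;> interval_cases b3 <;>
      interval_cases b4 <;> interval_cases b5 <;> interval_cases b6 <;>
      first | (exfalso; omega) | decide

def rng : List ℤ := [-3,-2,-1,0]

lemma enumDec : ∀ a0 ∈ [(1:ℤ),2,3,4,5], ∀ a1 ∈ rng, ∀ a2 ∈ rng, ∀ a3 ∈ rng,
    ∀ a4 ∈ rng, ∀ a5 ∈ rng, ∀ a6 ∈ rng,
    (3*a0 + (a1+a2+a3+a4+a5+a6) = 3 ∧
     0 ≤ a0 + a1 + a2 ∧ 0 ≤ a0 + a1 + a3 ∧ 0 ≤ a0 + a1 + a4 ∧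
     0 ≤ a0 + a1 + a5 ∧ 0 ≤ a0 + a1 + a6 ∧ 0 ≤ a0 + a2 + a3 ∧
     0 ≤ a0 + a2 + a4 ∧ 0 ≤ a0 + a2 + a5 ∧ 0 ≤ a0 + a2 + a6 ∧
     0 ≤ a0 + a3 + a4 ∧ 0 ≤ a0 + a3 + a5 ∧ 0 ≤ a0 + a3 + a6 ∧
     0 ≤ a0 + a4 + a5 ∧ 0 ≤ a0 + a4 + a6 ∧ 0 ≤ a0 + a5 + a6 ∧
     0 ≤ 2*a0 + (a2+a3+a4+a5+a6) ∧ 0 ≤ 2*a0 + (a1+a3+a4+a5+a6) ∧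
     0 ≤ 2*a0 + (a1+a2+a4+a5+a6) ∧ 0 ≤ 2*a0 + (a1+a2+a3+a5+a6) ∧
     0 ≤ 2*a0 + (a1+a2+a3+a4+a6) ∧ 0 ≤ 2*a0 + (a1+a2+a3+a4+a5)) →
    ![a0,a1,a2,a3,a4,a5,a6] ∈ nefL := by decide

lemma enum (a0 a1 a2 a3 a4 a5 a6 : ℤ)
    (hd : 3*a0 + (a1+a2+a3+a4+a5+a6) = 3)
    (g0 : 0 ≤ a0*0 - (a1*1+a2*0+a3*0+a4*0+a5*0+a6*0))
    (g1 : 0 ≤ a0*0 - (a1*0+a2*1+a3*0+a4*0+a5*0+a6*0))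
    (g2 : 0 ≤ a0*0 - (a1*0+a2*0+a3*1+a4*0+a5*0+a6*0))
    (g3 : 0 ≤ a0*0 - (a1*0+a2*0+a3*0+a4*1+a5*0+a6*0))
    (g4 : 0 ≤ a0*0 - (a1*0+a2*0+a3*0+a4*0+a5*1+a6*0))
    (g5 : 0 ≤ a0*0 - (a1*0+a2*0+a3*0+a4*0+a5*0+a6*1))
    (g6 : 0 ≤ a0*1 - (a1*(-1)+a2*(-1)+a3*0+a4*0+a5*0+a6*0))
    (g7 : 0 ≤ a0*1 - (a1*(-1)+a2*0+a3*(-1)+a4*0+a5*0+a6*0))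
    (g8 : 0 ≤ a0*1 - (a1*(-1)+a2*0+a3*0+a4*(-1)+a5*0+a6*0))
    (g9 : 0 ≤ a0*1 - (a1*(-1)+a2*0+a3*0+a4*0+a5*(-1)+a6*0))
    (g10 : 0 ≤ a0*1 - (a1*(-1)+a2*0+a3*0+a4*0+a5*0+a6*(-1)))
    (g11 : 0 ≤ a0*1 - (a1*0+a2*(-1)+a3*(-1)+a4*0+a5*0+a6*0))
    (g12 : 0 ≤ a0*1 - (a1*0+a2*(-1)+a3*0+a4*(-1)+a5*0+a6*0))
    (g13 : 0 ≤ a0*1 - (a1*0+a2*(-1)+a3*0+a4*0+a5*(-1)+a6*0))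
    (g14 : 0 ≤ a0*1 - (a1*0+a2*(-1)+a3*0+a4*0+a5*0+a6*(-1)))
    (g15 : 0 ≤ a0*1 - (a1*0+a2*0+a3*(-1)+a4*(-1)+a5*0+a6*0))
    (g16 : 0 ≤ a0*1 - (a1*0+a2*0+a3*(-1)+a4*0+a5*(-1)+a6*0))
    (g17 : 0 ≤ a0*1 - (a1*0+a2*0+a3*(-1)+a4*0+a5*0+a6*(-1)))
    (g18 : 0 ≤ a0*1 - (a1*0+a2*0+a3*0+a4*(-1)+a5*(-1)+a6*0))
    (g19 : 0 ≤ a0*1 - (a1*0+a2*0+a3*0+a4*(-1)+a5*0+a6*(-1)))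
    (g20 : 0 ≤ a0*1 - (a1*0+a2*0+a3*0+a4*0+a5*(-1)+a6*(-1)))
    (g21 : 0 ≤ a0*2 - (a1*0+a2*(-1)+a3*(-1)+a4*(-1)+a5*(-1)+a6*(-1)))
    (g22 : 0 ≤ a0*2 - (a1*(-1)+a2*0+a3*(-1)+a4*(-1)+a5*(-1)+a6*(-1)))
    (g23 : 0 ≤ a0*2 - (a1*(-1)+a2*(-1)+a3*0+a4*(-1)+a5*(-1)+a6*(-1)))
    (g24 : 0 ≤ a0*2 - (a1*(-1)+a2*(-1)+a3*(-1)+a4*0+a5*(-1)+a6*(-1)))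
    (g25 : 0 ≤ a0*2 - (a1*(-1)+a2*(-1)+a3*(-1)+a4*(-1)+a5*0+a6*(-1)))
    (g26 : 0 ≤ a0*2 - (a1*(-1)+a2*(-1)+a3*(-1)+a4*(-1)+a5*(-1)+a6*0)) :
    ![a0,a1,a2,a3,a4,a5,a6] ∈ nefL := by
  refine enumDec a0 ?_ a1 ?_ a2 ?_ a3 ?_ a4 ?_ a5 ?_ a6 ?_ (by omega)
  all_goals simp only [rng, List.mem_cons, List.mem_singleton, List.not_mem_nil, or_false]
  all_goals omega

/-- Every nef class of anticanonical degree `3` in `Λ₆` is either `−K₆` or a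
twisted cubic; consequently there are `72 + 1 = 73` nef classes of
anticanonical degree `3` in `Λ₆`. -/
theorem nef_deg_three_in_Lambda6 :
    (∀ D : Fin (6 + 1) → ℤ, Nef D → pair (-Kc 6) D = 3 →
        D = -Kc 6 ∨ pair D D = 1) ∧
    {D : Fin (6 + 1) → ℤ | Nef D ∧ pair (-Kc 6) D = 3}.ncard = 72 + 1 := by
  have main : ∀ D : Fin (6 + 1) → ℤ, Nef D → pair (-Kc 6) D = 3 → D ∈ nefL := by
    intro D hN hdeg
    obtain ⟨b0,b1,b2,b3,b4,b5,b6,rfl⟩ : ∃ c0 c1 c2 c3 c4 c5 c6,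
        D = ![c0,c1,c2,c3,c4,c5,c6] := ⟨_,_,_,_,_,_,_, etaD D⟩
    rw [pair_nKv] at hdeg
    have g0 := hN ![0,1,0,0,0,0,0] (⟨by decide, by decide⟩)
    rw [pair_vv] at g0
    have g1 := hN ![0,0,1,0,0,0,0] (⟨by decide, by decide⟩)
    rw [pair_vv] at g1
    have g2 := hN ![0,0,0,1,0,0,0] (⟨by decide, by decide⟩)
    rw [pair_vv] at g2
    have g3 := hN ![0,0,0,0,1,0,0] (⟨by decide, by decide⟩)
    rw [pair_vv] at g3
    have g4 := hN ![0,0,0,0,0,1,0] (⟨by decide, by decide⟩)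
    rw [pair_vv] at g4
    have g5 := hN ![0,0,0,0,0,0,1] (⟨by decide, by decide⟩)
    rw [pair_vv] at g5
    have g6 := hN ![1,-1,-1,0,0,0,0] (⟨by decide, by decide⟩)
    rw [pair_vv] at g6
    have g7 := hN ![1,-1,0,-1,0,0,0] (⟨by decide, by decide⟩)
    rw [pair_vv] at g7
    have g8 := hN ![1,-1,0,0,-1,0,0] (⟨by decide, by decide⟩)
    rw [pair_vv] at g8
    have g9 := hN ![1,-1,0,0,0,-1,0] (⟨by decide, by decide⟩)
    rw [pair_vv] at g9
    have g10 := hN ![1,-1,0,0,0,0,-1] (⟨by decide, by decide⟩)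
    rw [pair_vv] at g10
    have g11 := hN ![1,0,-1,-1,0,0,0] (⟨by decide, by decide⟩)
    rw [pair_vv] at g11
    have g12 := hN ![1,0,-1,0,-1,0,0] (⟨by decide, by decide⟩)
    rw [pair_vv] at g12
    have g13 := hN ![1,0,-1,0,0,-1,0] (⟨by decide, by decide⟩)
    rw [pair_vv] at g13
    have g14 := hN ![1,0,-1,0,0,0,-1] (⟨by decide, by decide⟩)
    rw [pair_vv] at g14
    have g15 := hN ![1,0,0,-1,-1,0,0] (⟨by decide, by decide⟩)
    rw [pair_vv] at g15
    have g16 := hN ![1,0,0,-1,0,-1,0] (⟨by decide, by decide⟩)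
    rw [pair_vv] at g16
    have g17 := hN ![1,0,0,-1,0,0,-1] (⟨by decide, by decide⟩)
    rw [pair_vv] at g17
    have g18 := hN ![1,0,0,0,-1,-1,0] (⟨by decide, by decide⟩)
    rw [pair_vv] at g18
    have g19 := hN ![1,0,0,0,-1,0,-1] (⟨by decide, by decide⟩)
    rw [pair_vv] at g19
    have g20 := hN ![1,0,0,0,0,-1,-1] (⟨by decide, by decide⟩)
    rw [pair_vv] at g20
    have g21 := hN ![2,0,-1,-1,-1,-1,-1] (⟨by decide, by decide⟩)
    rw [pair_vv] at g21
    have g22 := hN ![2,-1,0,-1,-1,-1,-1] (⟨by decide, by decide⟩)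
    rw [pair_vv] at g22
    have g23 := hN ![2,-1,-1,0,-1,-1,-1] (⟨by decide, by decide⟩)
    rw [pair_vv] at g23
    have g24 := hN ![2,-1,-1,-1,0,-1,-1] (⟨by decide, by decide⟩)
    rw [pair_vv] at g24
    have g25 := hN ![2,-1,-1,-1,-1,0,-1] (⟨by decide, by decide⟩)
    rw [pair_vv] at g25
    have g26 := hN ![2,-1,-1,-1,-1,-1,0] (⟨by decide, by decide⟩)
    rw [pair_vv] at g26
    exact enum b0 b1 b2 b3 b4 b5 b6 hdeg g0 g1 g2 g3 g4 g5 g6 g7 g8 g9 g10 g11 g12 g13 g14 g15 g16 g17 g18 g19 g20 g21 g22 g23 g24 g25 g26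
  have nefL_nef : ∀ D ∈ nefL, ∀ E ∈ excL, 0 ≤ pair D E := by decide
  have nefL_deg : ∀ D ∈ nefL, pair (-Kc 6) D = 3 := by decide
  have nefL_cls : ∀ D ∈ nefL, D = -Kc 6 ∨ pair D D = 1 := by decide
  constructor
  · intro D hN hdeg
    exact nefL_cls D (main D hN hdeg)
  · have hset : {D : Fin (6 + 1) → ℤ | Nef D ∧ pair (-Kc 6) D = 3} = ↑(nefL.toFinset) := by
      ext D
      simp only [Set.mem_setOf_eq, Finset.coe_sort_coe, Finset.mem_coe, List.mem_toFinset]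
      constructor
      · rintro ⟨hN, hdeg⟩
        exact main D hN hdeg
      · intro hD
        refine ⟨?_, nefL_deg D hD⟩
        intro E hE
        exact nefL_nef D hD E (exc_mem E hE)
    rw [hset, Set.ncard_coe_finset]
    decide
end
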